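/- Fix a pair of test channels (P*_{X̂₁|X}, P*_{X̂₂|XX̂₁}) achieving 𝖱_FY(R₁,D₁,D₂|P_X) (hence satisfying the optimality fixed-point equations), and additionally, for every (y,x̂₁) with P*_{YX̂₁}(y,x̂₁) = 0, choose P*_{X̂₂|YX̂₁}(·|y,x̂₁) to maximize, over conditional pmfs Q_{X̂₂|YX̂₁}, the quantity E_{P_{X|Y=y}}[ β(X,y) · β₂(X,y,x̂₁|Q_{X̂₂|YX̂₁})^{−1/(1+s*)} · exp(−t₁* d₁(X,x̂₁)/(1+s*)) ]. Write β₂(x,y,x̂₁) := β₂(x,y,x̂₁|P*_{X̂₂|YX̂₁}), β(x,y) := β(x,y|P*_{X̂₁},P*_{X̂₂|YX̂₁}), ι₁(x,y,x̂₁) := log β(x,y) − (1/(1+s*)) log β₂(x,y,x̂₁), ι₂(x,y,x̂₁) := log β(x,y) + (s*/(1+s*)) log β₂(x,y,x̂₁), w₁(x̂₁) := E_{P_{XY}}[ exp( ι₁(X,Y,x̂₁) − t₁* d₁(X,x̂₁)/(1+s*) ) ], and, for a conditional pmf Q_{X̂₂|YX̂₁}, w₂(x̂₁,Q_{X̂₂|YX̂₁})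 := Σ_{x,y,x̂₂} P_{XY}(x,y) Q_{X̂₂|YX̂₁}(x̂₂|y,x̂₁) exp( ι₂(x,y,x̂₁) − t₁* d₁(x,x̂₁)/(1+s*) − t₂* d₂(x,x̂₂) ). Then for every x̂₁ ∈ 𝒳̂₁ and every conditional pmf Q_{X̂₂|YX̂₁}: w₂(x̂₁, Q_{X̂₂|YX̂₁}) ≤ w₁(x̂₁) ≤ 1. -/

import Mathlib

open scoped BigOperators Classical
open Finset

namespace FY

/-- A probability mass function on a finite type. -/
def IsPMF {α : Type*} [Fintype α] (p : α → ℝ) : Prop :=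
  (∀ a, 0 ≤ p a) ∧ ∑ a, p a = 1

variable {X Y X1 X2 : Type*} [Fintype X] [Fintype Y] [Fintype X1] [Fintype X2]
  [DecidableEq Y]

/-- A test channel `P_{X̂₁|X}`. -/
def IsChan1 (V : X → X1 → ℝ) : Prop := ∀ x, IsPMF (V x)

/-- A test channel `P_{X̂₂|X X̂₁}`. -/
def IsChan2 (V : X → X1 → X2 → ℝ) : Prop := ∀ x a, IsPMF (V x a)

/-- The pmf of `Y = g(X)` induced by `P_X` and `g`. -/
noncomputable def pY (P : X → ℝ) (g : X → Y) (y : Y) : ℝ :=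
  ∑ x, if g x = y then P x else 0

/-- The reproduction marginal `P_{X̂₁}`. -/
noncomputable def pA (P : X → ℝ) (V1 : X → X1 → ℝ) (a : X1) : ℝ :=
  ∑ x, P x * V1 x a

/-- The joint marginal `P_{Y X̂₁}`. -/
noncomputable def pYA (P : X → ℝ) (g : X → Y) (V1 : X → X1 → ℝ) (y : Y) (a : X1) : ℝ :=
  ∑ x, if g x = y then P x * V1 x a else 0

/-- The joint marginal `P_{Y X̂₁ X̂₂}`. -/
noncomputable def pYAB (P : X → ℝ) (g : X → Y) (V1 : X → X1 → ℝ) (V2 : X → X1 → X2 → ℝ)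
    (y : Y) (a : X1) (b : X2) : ℝ :=
  ∑ x, if g x = y then P x * V1 x a * V2 x a b else 0

/-- The conditional pmf `P_{X̂₂|Y X̂₁}`. -/
noncomputable def pBgYA (P : X → ℝ) (g : X → Y) (V1 : X → X1 → ℝ) (V2 : X → X1 → X2 → ℝ)
    (y : Y) (a : X1) (b : X2) : ℝ :=
  pYAB P g V1 V2 y a b / pYA P g V1 y a

/-- The mutual information `I(X; X̂₁)`. -/
noncomputable def IX1 (P : X → ℝ) (V1 : X → X1 → ℝ) : ℝ :=
  ∑ x, ∑ a, P x * V1 x a * Real.log (V1 x a / pA P V1 a)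

/-- The mutual information `I(X̂₁; Y)`. -/
noncomputable def IAY (P : X → ℝ) (g : X → Y) (V1 : X → X1 → ℝ) : ℝ :=
  ∑ y, ∑ a, pYA P g V1 y a * Real.log (pYA P g V1 y a / (pY P g y * pA P V1 a))

/-- The conditional mutual information `I(X; X̂₁, X̂₂ | Y)`. -/
noncomputable def IXABgY (P : X → ℝ) (g : X → Y) (V1 : X → X1 → ℝ)
    (V2 : X → X1 → X2 → ℝ) : ℝ :=
  ∑ x, ∑ a, ∑ b, P x * V1 x a * V2 x a b *
    Real.log ((V1 x a * V2 x a b) / (pYAB P g V1 V2 (g x) a b / pY P g (g x)))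

/-- The conditional mutual information `I(X; X̂₂ | Y, X̂₁)`. -/
noncomputable def IX2gYA (P : X → ℝ) (g : X → Y) (V1 : X → X1 → ℝ)
    (V2 : X → X1 → X2 → ℝ) : ℝ :=
  ∑ x, ∑ a, ∑ b, P x * V1 x a * V2 x a b *
    Real.log (V2 x a b / pBgYA P g V1 V2 (g x) a b)

/-- Expected first distortion. -/
noncomputable def Ed1 (P : X → ℝ) (V1 : X → X1 → ℝ) (d1 : X → X1 → ℝ) : ℝ :=
  ∑ x, ∑ a, P x * V1 x a * d1 x a

/-- Expected second distortion. -/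
noncomputable def Ed2 (P : X → ℝ) (V1 : X → X1 → ℝ) (V2 : X → X1 → X2 → ℝ)
    (d2 : X → X2 → ℝ) : ℝ :=
  ∑ x, ∑ a, ∑ b, P x * V1 x a * V2 x a b * d2 x b

/-- The minimum sum-rate function `𝖱_FY(R₁,D₁,D₂|P_X)` of the Fu–Yeung problem. -/
noncomputable def RFY (P : X → ℝ) (g : X → Y) (d1 : X → X1 → ℝ) (d2 : X → X2 → ℝ)
    (R1 D1 D2 : ℝ) : ℝ :=
  sInf { r | ∃ (V1 : X → X1 → ℝ) (V2 : X → X1 → X2 → ℝ),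
    IsChan1 V1 ∧ IsChan2 V2 ∧ IX1 P V1 ≤ R1 ∧
    Ed1 P V1 d1 ≤ D1 ∧ Ed2 P V1 V2 d2 ≤ D2 ∧
    r = IAY P g V1 + IXABgY P g V1 V2 }

/-- `(V1,V2)` is a feasible pair achieving `𝖱_FY(R₁,D₁,D₂|P_X)`. -/
def Achieves (P : X → ℝ) (g : X → Y) (d1 : X → X1 → ℝ) (d2 : X → X2 → ℝ)
    (R1 D1 D2 : ℝ) (V1 : X → X1 → ℝ) (V2 : X → X1 → X2 → ℝ) : Prop :=
  IsChan1 V1 ∧ IsChan2 V2 ∧ IX1 P V1 ≤ R1 ∧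
    Ed1 P V1 d1 ≤ D1 ∧ Ed2 P V1 V2 d2 ≤ D2 ∧
    IAY P g V1 + IXABgY P g V1 V2 = RFY P g d1 d2 R1 D1 D2

/-- `(s*,t₁*,t₂*)` are dual-optimal multipliers for `𝖱_FY(R₁,D₁,D₂|P_X)`. -/
def DualOpt (P : X → ℝ) (g : X → Y) (d1 : X → X1 → ℝ) (d2 : X → X2 → ℝ)
    (R1 D1 D2 s t1 t2 : ℝ) : Prop :=
  0 ≤ s ∧ 0 ≤ t1 ∧ 0 ≤ t2 ∧
  RFY P g d1 d2 R1 D1 D2 = sInf { r | ∃ (V1 : X → X1 → ℝ) (V2 : X → X1 → X2 → ℝ),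
    IsChan1 V1 ∧ IsChan2 V2 ∧
    r = (1 + s) * IX1 P V1 + IX2gYA P g V1 V2 + t1 * Ed1 P V1 d1 + t2 * Ed2 P V1 V2 d2
        - s * R1 - t1 * D1 - t2 * D2 }

/-- `β₂(x,y,x̂₁ | Q_{X̂₂|YX̂₁})`. -/
noncomputable def beta2 (d2 : X → X2 → ℝ) (t2 : ℝ) (Q2 : Y → X1 → X2 → ℝ)
    (x : X) (y : Y) (a : X1) : ℝ :=
  (∑ b, Q2 y a b * Real.exp (-(t2 * d2 x b)))⁻¹

/-- `β(x,y | Q_{X̂₁}, Q_{X̂₂|YX̂₁})`. -/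
noncomputable def beta (d1 : X → X1 → ℝ) (d2 : X → X2 → ℝ) (s t1 t2 : ℝ)
    (Q1 : X1 → ℝ) (Q2 : Y → X1 → X2 → ℝ) (x : X) (y : Y) : ℝ :=
  (∑ a, Q1 a *
    Real.exp (-((t1 * d1 x a + Real.log (beta2 d2 t2 Q2 x y a)) / (1 + s))))⁻¹

/-- The rate-distortion-tilted information density `j_FY(x,y|R₁,D₁,D₂,P_X)`, built from
the marginals `Q1 = P*_{X̂₁}`, `Q2 = P*_{X̂₂|YX̂₁}` of an optimal test-channel pair. -/
noncomputable def jFY (d1 : X → X1 → ℝ) (d2 : X → X2 → ℝ) (s t1 t2 R1 D1 D2 : ℝ)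
    (Q1 : X1 → ℝ) (Q2 : Y → X1 → X2 → ℝ) (x : X) (y : Y) : ℝ :=
  (1 + s) * Real.log (beta d1 d2 s t1 t2 Q1 Q2 x y) - s * R1 - t1 * D1 - t2 * D2

/-- The (plain) rate-distortion function `R(P_X, D)`. -/
noncomputable def Rrd (P : X → ℝ) (d1 : X → X1 → ℝ) (D : ℝ) : ℝ :=
  sInf { r | ∃ V1 : X → X1 → ℝ, IsChan1 V1 ∧ Ed1 P V1 d1 ≤ D ∧ r = IX1 P V1 }

/-- The `D₁`-tilted information density `j(x, D₁|P_X)`, built from the reproduction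
marginal `Q1` of an optimal test channel for `R(P_X,D₁)` and the multiplier `t`. -/
noncomputable def jD (d1 : X → X1 → ℝ) (t D1 : ℝ) (Q1 : X1 → ℝ) (x : X) : ℝ :=
  -Real.log (∑ a, Q1 a * Real.exp (-(t * (d1 x a - D1))))

/-- The Shannon entropy of a pmf. -/
noncomputable def ent {α : Type*} [Fintype α] (p : α → ℝ) : ℝ :=
  -∑ a, p a * Real.log (p a)

/-- The variance of `f(X)` under the pmf `P`. -/
noncomputable def varX (P : X → ℝ) (f : X → ℝ) : ℝ :=
  ∑ x, P x * (f x - ∑ x', P x' * f x') ^ 2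

/-- The covariance of `f(X)` and `h(X)` under the pmf `P`. -/
noncomputable def covX (P : X → ℝ) (f h : X → ℝ) : ℝ :=
  ∑ x, P x * (f x - ∑ x', P x' * f x') * (h x - ∑ x', P x' * h x')

end FY

namespace FY

set_option linter.unusedSectionVars false
set_option linter.unusedVariables false
set_option maxHeartbeats 1000000

section AuxGeneric

lemma exists_pos_of_sum_one {α : Type*} [Fintype α] {p : α → ℝ}
    (h0 : ∀ a, 0 ≤ p a) (h1 : ∑ a, p a = 1) : ∃ a, 0 < p a := by
  by_contra h
  push_neg at h
  have hz : ∑ a, p a = 0 := Finset.sum_eq_zero fun a _ => le_antisymm (h a) (h0 a)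
  rw [hz] at h1; norm_num at h1

/-- Gibbs' inequality / log-sum inequality, Lean-convention safe. -/
lemma gibbs {α : Type*} [Fintype α] {p q : α → ℝ}
    (hp0 : ∀ a, 0 ≤ p a) (hp1 : ∑ a, p a = 1) (hq0 : ∀ a, 0 ≤ q a)
    (hpq : ∀ a, 0 < p a → 0 < q a) :
    -Real.log (∑ a, q a) ≤ ∑ a, p a * Real.log (p a / q a) := by
  obtain ⟨a0, ha0⟩ := exists_pos_of_sum_one hp0 hp1
  have hZ : 0 < ∑ a, q a :=
    Finset.sum_pos' (fun a _ => hq0 a) ⟨a0, Finset.mem_univ _, hpq a0 ha0⟩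
  set Z := ∑ a, q a with hZdef
  have key : ∀ a, p a - q a / Z ≤ p a * Real.log (p a / q a) + p a * Real.log Z := by
    intro a
    rcases (hp0 a).lt_or_eq with hpa | hpa
    · have hqa := hpq a hpa
      have h1 : Real.log (q a / (p a * Z)) ≤ q a / (p a * Z) - 1 :=
        Real.log_le_sub_one_of_pos (by positivity)
      have h2 : Real.log (q a / (p a * Z)) = Real.log (q a) - (Real.log (p a) + Real.log Z) := by
        rw [Real.log_div (ne_of_gt hqa) (by positivity),
          Real.log_mul (ne_of_gt hpa) (ne_of_gt hZ)]
      have h3 : Real.log (p a / q a) = Real.log (p a) - Real.log (q a) :=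
        Real.log_div (ne_of_gt hpa) (ne_of_gt hqa)
      have h5 : p a * Real.log (q a / (p a * Z)) ≤ p a * (q a / (p a * Z) - 1) :=
        mul_le_mul_of_nonneg_left h1 (le_of_lt hpa)
      have h6 : p a * (q a / (p a * Z) - 1) = q a / Z - p a := by
        field_simp
      rw [h2, h6] at h5
      rw [h3]
      nlinarith [h5]
    · rw [← hpa]
      simp only [zero_mul, zero_sub, add_zero, zero_add]
      have : 0 ≤ q a / Z := div_nonneg (hq0 a) (le_of_lt hZ)
      linarith
  have hsum := Finset.sum_le_sum (fun a (_ : a ∈ Finset.univ) => key a)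
  rw [Finset.sum_sub_distrib, Finset.sum_add_distrib, ← Finset.sum_div, ← Finset.sum_mul,
    hp1] at hsum
  have : Z / Z = 1 := div_self (ne_of_gt hZ)
  rw [this] at hsum
  linarith

/-- If `h ≤ 0` on `(0,1)`, `h 0 = 0` and `h` is differentiable at `0`, then `h' 0 ≤ 0`. -/
lemma deriv_nonpos_of_nonpos {h : ℝ → ℝ} {c : ℝ} (hd : HasDerivAt h c 0) (h0 : h 0 = 0)
    (hle : ∀ ε ∈ Set.Ioo (0:ℝ) 1, h ε ≤ 0) : c ≤ 0 := by
  have H : Filter.Tendsto (slope h 0) (nhdsWithin 0 (Set.Ioi 0)) (nhds c) :=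
    (hasDerivAt_iff_tendsto_slope.mp hd).mono_left
      (nhdsWithin_mono _ (fun x hx => Set.mem_compl_singleton_iff.mpr (ne_of_gt hx)))
  refine le_of_tendsto H ?_
  filter_upwards [Ioo_mem_nhdsGT_of_mem (Set.left_mem_Ico.mpr one_pos)] with ε hε
  rw [slope_def_field, h0, sub_zero, sub_zero]
  exact div_nonpos_of_nonpos_of_nonneg (hle ε hε) (le_of_lt hε.1)

end AuxGeneric
section AuxFY

variable {X Y X1 X2 : Type*} [Fintype X] [Fintype Y] [Fintype X1] [Fintype X2] [DecidableEq Y]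
variable {P : X → ℝ} {g : X → Y} {V1 : X → X1 → ℝ} {V2 : X → X1 → X2 → ℝ}

lemma sum_collapse {f : X → Y → ℝ} (g : X → Y) :
    ∑ y, ∑ x, (if g x = y then f x y else 0) = ∑ x, f x (g x) := by
  rw [Finset.sum_comm]
  refine Finset.sum_congr rfl fun x _ => ?_
  rw [Finset.sum_ite_eq]
  simp

lemma pA_nonneg (hP : IsPMF P) (hV1 : IsChan1 V1) (a : X1) : 0 ≤ pA P V1 a :=
  Finset.sum_nonneg fun x _ => mul_nonneg (hP.1 x) ((hV1 x).1 a)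

lemma term_le_pA (hP : IsPMF P) (hV1 : IsChan1 V1) (x : X) (a : X1) :
    P x * V1 x a ≤ pA P V1 a :=
  Finset.single_le_sum (f := fun x' => P x' * V1 x' a)
    (fun i _ => mul_nonneg (hP.1 i) ((hV1 i).1 a)) (Finset.mem_univ x)

lemma sum_pA (hP : IsPMF P) (hV1 : IsChan1 V1) : ∑ a, pA P V1 a = 1 := by
  rw [show (∑ a, pA P V1 a) = ∑ a, ∑ x, P x * V1 x a from rfl, Finset.sum_comm]
  have : ∀ x : X, ∑ a, P x * V1 x a = P x := by
    intro x
    rw [← Finset.mul_sum, (hV1 x).2, mul_one]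
  simp only [this]
  exact hP.2

lemma isPMF_pA (hP : IsPMF P) (hV1 : IsChan1 V1) : IsPMF (pA P V1) :=
  ⟨pA_nonneg hP hV1, sum_pA hP hV1⟩

lemma pYA_nonneg (hP : IsPMF P) (hV1 : IsChan1 V1) (y : Y) (a : X1) :
    0 ≤ pYA P g V1 y a := by
  refine Finset.sum_nonneg fun x _ => ?_
  split_ifs
  · exact mul_nonneg (hP.1 x) ((hV1 x).1 a)
  · exact le_refl 0

lemma term_le_pYA (hP : IsPMF P) (hV1 : IsChan1 V1) (x : X) (a : X1) :
    P x * V1 x a ≤ pYA P g V1 (g x) a := by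
  have h := Finset.single_le_sum
    (f := fun x' => if g x' = g x then P x' * V1 x' a else 0)
    (fun i _ => by
      split_ifs
      · exact mul_nonneg (hP.1 i) ((hV1 i).1 a)
      · exact le_refl 0)
    (Finset.mem_univ x)
  simpa [pYA] using h

lemma pYA_le_pA (hP : IsPMF P) (hV1 : IsChan1 V1) (y : Y) (a : X1) :
    pYA P g V1 y a ≤ pA P V1 a := by
  refine Finset.sum_le_sum fun x _ => ?_
  split_ifs
  · exact le_refl _
  · exact mul_nonneg (hP.1 x) ((hV1 x).1 a)

lemma pYAB_nonneg (hP : IsPMF P) (hV1 : IsChan1 V1) (hV2 : IsChan2 V2) (y : Y) (a : X1) (b : X2) :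
    0 ≤ pYAB P g V1 V2 y a b := by
  refine Finset.sum_nonneg fun x _ => ?_
  split_ifs
  · exact mul_nonneg (mul_nonneg (hP.1 x) ((hV1 x).1 a)) ((hV2 x a).1 b)
  · exact le_refl 0

lemma term_le_pYAB (hP : IsPMF P) (hV1 : IsChan1 V1) (hV2 : IsChan2 V2) (x : X) (a : X1) (b : X2) :
    P x * V1 x a * V2 x a b ≤ pYAB P g V1 V2 (g x) a b := by
  have h := Finset.single_le_sum
    (f := fun x' => if g x' = g x then P x' * V1 x' a * V2 x' a b else 0)
    (fun i _ => by
      split_ifs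
      · exact mul_nonneg (mul_nonneg (hP.1 i) ((hV1 i).1 a)) ((hV2 i a).1 b)
      · exact le_refl 0)
    (Finset.mem_univ x)
  simpa [pYAB] using h

lemma sum_pYAB (hV2 : IsChan2 V2) (y : Y) (a : X1) :
    ∑ b, pYAB P g V1 V2 y a b = pYA P g V1 y a := by
  rw [show (∑ b, pYAB P g V1 V2 y a b) = ∑ b, ∑ x, (if g x = y then P x * V1 x a * V2 x a b else 0) from rfl,
    Finset.sum_comm, pYA]
  refine Finset.sum_congr rfl fun x _ => ?_
  by_cases h : g x = y
  · simp only [if_pos h]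
    rw [← Finset.mul_sum, (hV2 x a).2, mul_one]
  · simp only [if_neg h, Finset.sum_const_zero]

end AuxFY
section AuxFY2

variable {X Y X1 X2 : Type*} [Fintype X] [Fintype Y] [Fintype X1] [Fintype X2] [DecidableEq Y]
variable {P : X → ℝ} {g : X → Y} {V1 : X → X1 → ℝ} {V2 : X → X1 → X2 → ℝ}
variable {d1 : X → X1 → ℝ} {d2 : X → X2 → ℝ} {R1 D1 D2 s t1 t2 : ℝ}

/-- `I(X̂₁;Y)` rewritten as a sum over `x`. -/
lemma IAY_eq (hP : IsPMF P) (hV1 : IsChan1 V1) :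
    IAY P g V1 = ∑ x, ∑ a, P x * V1 x a *
      Real.log (pYA P g V1 (g x) a / (pY P g (g x) * pA P V1 a)) := by
  have h1 : ∀ a : X1,
      (∑ y, pYA P g V1 y a * Real.log (pYA P g V1 y a / (pY P g y * pA P V1 a)))
      = ∑ x, P x * V1 x a *
          Real.log (pYA P g V1 (g x) a / (pY P g (g x) * pA P V1 a)) := by
    intro a
    rw [← sum_collapse (g := g)
      (f := fun x y => P x * V1 x a * Real.log (pYA P g V1 y a / (pY P g y * pA P V1 a)))]
    refine Finset.sum_congr rfl fun y _ => ?_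
    rw [pYA, Finset.sum_mul]
    refine Finset.sum_congr rfl fun x _ => ?_
    by_cases h : g x = y <;> simp [h]
  calc IAY P g V1
      = ∑ a, ∑ y, pYA P g V1 y a * Real.log (pYA P g V1 y a / (pY P g y * pA P V1 a)) := by
        rw [IAY, Finset.sum_comm]
    _ = ∑ a, ∑ x, P x * V1 x a *
          Real.log (pYA P g V1 (g x) a / (pY P g (g x) * pA P V1 a)) :=
        Finset.sum_congr rfl fun a _ => h1 a
    _ = _ := Finset.sum_comm

/-- The chain-rule identity `I(X̂₁;Y) + I(X;X̂₁X̂₂|Y) = I(X;X̂₁) + I(X;X̂₂|Y,X̂₁)`. -/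
lemma chain_eq (hP : IsPMF P) (hpY : ∀ y, 0 < pY P g y) (hV1 : IsChan1 V1)
    (hV2 : IsChan2 V2) :
    IAY P g V1 + IXABgY P g V1 V2 = IX1 P V1 + IX2gYA P g V1 V2 := by
  classical
  set D : X → X1 → ℝ := fun x a =>
    Real.log (pYA P g V1 (g x) a / (pY P g (g x) * V1 x a)) with hD
  have hIAY : IAY P g V1 = IX1 P V1 + ∑ x, ∑ a, P x * V1 x a * D x a := by
    rw [IAY_eq hP hV1, IX1, ← Finset.sum_add_distrib]
    refine Finset.sum_congr rfl fun x _ => ?_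
    rw [← Finset.sum_add_distrib]
    refine Finset.sum_congr rfl fun a _ => ?_
    rcases (mul_nonneg (hP.1 x) ((hV1 x).1 a)).lt_or_eq with hpos | hzero
    · have hPx : 0 < P x := by
        rcases (hP.1 x).lt_or_eq with h | h
        · exact h
        · exfalso; rw [← h] at hpos; simp at hpos
      have hVx : 0 < V1 x a := by
        rcases ((hV1 x).1 a).lt_or_eq with h | h
        · exact h
        · exfalso; rw [← h] at hpos; simp at hpos
      have hpYA : 0 < pYA P g V1 (g x) a := lt_of_lt_of_le hpos (term_le_pYA hP hV1 x a)
      have hpA : 0 < pA P V1 a := lt_of_lt_of_le hpos (term_le_pA hP hV1 x a)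
      have hpy := hpY (g x)
      rw [← mul_add]
      congr 1
      simp only [hD]
      rw [Real.log_div (ne_of_gt hpYA) (ne_of_gt (mul_pos hpy hpA)),
        Real.log_mul (ne_of_gt hpy) (ne_of_gt hpA),
        Real.log_div (ne_of_gt hVx) (ne_of_gt hpA),
        Real.log_div (ne_of_gt hpYA) (ne_of_gt (mul_pos hpy hVx)),
        Real.log_mul (ne_of_gt hpy) (ne_of_gt hVx)]
      ring
    · rw [← hzero]; ring
  have hIXAB : IXABgY P g V1 V2 = IX2gYA P g V1 V2 - ∑ x, ∑ a, P x * V1 x a * D x a := by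
    rw [IXABgY, IX2gYA, ← Finset.sum_sub_distrib]
    refine Finset.sum_congr rfl fun x _ => ?_
    rw [← Finset.sum_sub_distrib]
    refine Finset.sum_congr rfl fun a _ => ?_
    have hsplit : P x * V1 x a * D x a = ∑ b, P x * V1 x a * V2 x a b * D x a := by
      rw [show (∑ b, P x * V1 x a * V2 x a b * D x a)
          = (P x * V1 x a * D x a) * ∑ b, V2 x a b from by
        rw [Finset.mul_sum]; exact Finset.sum_congr rfl fun b _ => by ring]
      rw [(hV2 x a).2, mul_one]
    rw [hsplit, ← Finset.sum_sub_distrib]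
    refine Finset.sum_congr rfl fun b _ => ?_
    rcases (mul_nonneg (mul_nonneg (hP.1 x) ((hV1 x).1 a)) ((hV2 x a).1 b)).lt_or_eq
      with hpos | hzero
    · have hPx : 0 < P x := by
        rcases (hP.1 x).lt_or_eq with h | h
        · exact h
        · exfalso; rw [← h] at hpos; simp at hpos
      have hVx : 0 < V1 x a := by
        rcases ((hV1 x).1 a).lt_or_eq with h | h
        · exact h
        · exfalso; rw [← h] at hpos; simp at hpos
      have hWx : 0 < V2 x a b := by
        rcases ((hV2 x a).1 b).lt_or_eq with h | h
        · exact h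
        · exfalso; rw [← h] at hpos; simp at hpos
      have hpYA : 0 < pYA P g V1 (g x) a :=
        lt_of_lt_of_le (mul_pos hPx hVx) (term_le_pYA hP hV1 x a)
      have hpYAB : 0 < pYAB P g V1 V2 (g x) a b :=
        lt_of_lt_of_le hpos (term_le_pYAB hP hV1 hV2 x a b)
      have hpy := hpY (g x)
      rw [show P x * V1 x a * V2 x a b *
            Real.log (V1 x a * V2 x a b / (pYAB P g V1 V2 (g x) a b / pY P g (g x)))
          = P x * V1 x a * V2 x a b *
            (Real.log (V2 x a b / pBgYA P g V1 V2 (g x) a b) - D x a) from ?_]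
      · ring
      congr 1
      simp only [hD, pBgYA]
      rw [Real.log_div (ne_of_gt (mul_pos hVx hWx)) (ne_of_gt (div_pos hpYAB hpy)),
        Real.log_mul (ne_of_gt hVx) (ne_of_gt hWx),
        Real.log_div (ne_of_gt hpYAB) (ne_of_gt hpy),
        Real.log_div (ne_of_gt hWx) (ne_of_gt (div_pos hpYAB hpYA)),
        Real.log_div (ne_of_gt hpYAB) (ne_of_gt hpYA),
        Real.log_div (ne_of_gt hpYA) (ne_of_gt (mul_pos hpy hVx)),
        Real.log_mul (ne_of_gt hpy) (ne_of_gt hVx)]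
      ring
    · rw [← hzero]; ring
  rw [hIAY, hIXAB]; ring

lemma IX1_nonneg (hP : IsPMF P) (hV1 : IsChan1 V1) : 0 ≤ IX1 P V1 := by
  rw [IX1]
  refine Finset.sum_nonneg fun x _ => ?_
  have hrw : ∑ a, P x * V1 x a * Real.log (V1 x a / pA P V1 a)
      = P x * ∑ a, V1 x a * Real.log (V1 x a / pA P V1 a) := by
    rw [Finset.mul_sum]; exact Finset.sum_congr rfl fun a _ => by ring
  rw [hrw]
  rcases (hP.1 x).lt_or_eq with hx | hx
  · refine mul_nonneg (le_of_lt hx) ?_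
    have h := gibbs (p := V1 x) (q := pA P V1) (hV1 x).1 (hV1 x).2 (pA_nonneg hP hV1)
      (fun a ha => lt_of_lt_of_le (mul_pos hx ha) (term_le_pA hP hV1 x a))
    rw [sum_pA hP hV1] at h
    simpa using h
  · rw [← hx]; simp

lemma IX2gYA_nonneg (hP : IsPMF P) (hV1 : IsChan1 V1) (hV2 : IsChan2 V2) :
    0 ≤ IX2gYA P g V1 V2 := by
  rw [IX2gYA]
  refine Finset.sum_nonneg fun x _ => Finset.sum_nonneg fun a _ => ?_
  have hrw : ∑ b, P x * V1 x a * V2 x a b *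
        Real.log (V2 x a b / pBgYA P g V1 V2 (g x) a b)
      = (P x * V1 x a) * ∑ b, V2 x a b *
        Real.log (V2 x a b / pBgYA P g V1 V2 (g x) a b) := by
    rw [Finset.mul_sum]; exact Finset.sum_congr rfl fun b _ => by ring
  rw [hrw]
  rcases (mul_nonneg (hP.1 x) ((hV1 x).1 a)).lt_or_eq with hpos | hzero
  · refine mul_nonneg (le_of_lt hpos) ?_
    have hpYA : 0 < pYA P g V1 (g x) a := lt_of_lt_of_le hpos (term_le_pYA hP hV1 x a)
    have hq0 : ∀ b, 0 ≤ pBgYA P g V1 V2 (g x) a b := fun b =>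
      div_nonneg (pYAB_nonneg hP hV1 hV2 _ _ _) (le_of_lt hpYA)
    have hsum : ∑ b, pBgYA P g V1 V2 (g x) a b = 1 := by
      rw [show (∑ b, pBgYA P g V1 V2 (g x) a b)
          = (∑ b, pYAB P g V1 V2 (g x) a b) / pYA P g V1 (g x) a from by
        rw [Finset.sum_div]; rfl]
      rw [sum_pYAB hV2, div_self (ne_of_gt hpYA)]
    have h := gibbs (p := V2 x a) (q := pBgYA P g V1 V2 (g x) a)
      (hV2 x a).1 (hV2 x a).2 hq0
      (fun b hb => by
        have : 0 < pYAB P g V1 V2 (g x) a b :=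
          lt_of_lt_of_le (mul_pos hpos hb) (term_le_pYAB hP hV1 hV2 x a b)
        exact div_pos this hpYA)
    rw [hsum] at h
    simpa using h
  · rw [← hzero]; simp

lemma Ed1_nonneg (hP : IsPMF P) (hV1 : IsChan1 V1) (hd1 : ∀ x a, 0 ≤ d1 x a) :
    0 ≤ Ed1 P V1 d1 :=
  Finset.sum_nonneg fun x _ => Finset.sum_nonneg fun a _ =>
    mul_nonneg (mul_nonneg (hP.1 x) ((hV1 x).1 a)) (hd1 x a)

lemma Ed2_nonneg (hP : IsPMF P) (hV1 : IsChan1 V1) (hV2 : IsChan2 V2)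
    (hd2 : ∀ x b, 0 ≤ d2 x b) : 0 ≤ Ed2 P V1 V2 d2 :=
  Finset.sum_nonneg fun x _ => Finset.sum_nonneg fun a _ => Finset.sum_nonneg fun b _ =>
    mul_nonneg (mul_nonneg (mul_nonneg (hP.1 x) ((hV1 x).1 a)) ((hV2 x a).1 b)) (hd2 x b)

/-- Global minimality of the achieving pair for the Lagrangian. -/
lemma LL_min (hP : IsPMF P) (hpY : ∀ y, 0 < pY P g y)
    (hd1 : ∀ x a, 0 ≤ d1 x a) (hd2 : ∀ x b, 0 ≤ d2 x b)
    (hdual : DualOpt P g d1 d2 R1 D1 D2 s t1 t2)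
    (hach : Achieves P g d1 d2 R1 D1 D2 V1 V2)
    (W1 : X → X1 → ℝ) (W2 : X → X1 → X2 → ℝ) (hW1 : IsChan1 W1) (hW2 : IsChan2 W2) :
    (1 + s) * IX1 P V1 + IX2gYA P g V1 V2 + t1 * Ed1 P V1 d1 + t2 * Ed2 P V1 V2 d2
      ≤ (1 + s) * IX1 P W1 + IX2gYA P g W1 W2 + t1 * Ed1 P W1 d1 + t2 * Ed2 P W1 W2 d2 := by
  obtain ⟨hs, ht1, ht2, hRFY⟩ := hdual
  obtain ⟨hV1, hV2, hIR, hE1, hE2, hval⟩ := hach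
  have hs1 : (0:ℝ) ≤ 1 + s := by linarith
  have hBdd : BddBelow {r | ∃ (U1 : X → X1 → ℝ) (U2 : X → X1 → X2 → ℝ),
      IsChan1 U1 ∧ IsChan2 U2 ∧
      r = (1 + s) * IX1 P U1 + IX2gYA P g U1 U2 + t1 * Ed1 P U1 d1 + t2 * Ed2 P U1 U2 d2
          - s * R1 - t1 * D1 - t2 * D2} := by
    refine ⟨-(s * R1) - t1 * D1 - t2 * D2, fun r hr => ?_⟩
    obtain ⟨U1, U2, hU1, hU2, hreq⟩ := hr
    have h1 : 0 ≤ (1 + s) * IX1 P U1 := mul_nonneg hs1 (IX1_nonneg hP hU1)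
    have h2 : 0 ≤ IX2gYA P g U1 U2 := IX2gYA_nonneg hP hU1 hU2
    have h3 : 0 ≤ t1 * Ed1 P U1 d1 := mul_nonneg ht1 (Ed1_nonneg hP hU1 hd1)
    have h4 : 0 ≤ t2 * Ed2 P U1 U2 d2 := mul_nonneg ht2 (Ed2_nonneg hP hU1 hU2 hd2)
    rw [hreq]; linarith
  have hmem : (1 + s) * IX1 P W1 + IX2gYA P g W1 W2 + t1 * Ed1 P W1 d1
      + t2 * Ed2 P W1 W2 d2 - s * R1 - t1 * D1 - t2 * D2 ∈
      {r | ∃ (U1 : X → X1 → ℝ) (U2 : X → X1 → X2 → ℝ),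
      IsChan1 U1 ∧ IsChan2 U2 ∧
      r = (1 + s) * IX1 P U1 + IX2gYA P g U1 U2 + t1 * Ed1 P U1 d1 + t2 * Ed2 P U1 U2 d2
          - s * R1 - t1 * D1 - t2 * D2} := ⟨W1, W2, hW1, hW2, rfl⟩
  have hle := csInf_le hBdd hmem
  rw [← hRFY] at hle
  have hchain := chain_eq hP hpY hV1 hV2
  have hRval : IX1 P V1 + IX2gYA P g V1 V2 = RFY P g d1 d2 R1 D1 D2 := by linarith
  have hsIX : s * IX1 P V1 ≤ s * R1 := mul_le_mul_of_nonneg_left hIR hs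
  have htE1 : t1 * Ed1 P V1 d1 ≤ t1 * D1 := mul_le_mul_of_nonneg_left hE1 ht1
  have htE2 : t2 * Ed2 P V1 V2 d2 ≤ t2 * D2 := mul_le_mul_of_nonneg_left hE2 ht2
  nlinarith [hle, hRval, hsIX, htE1, htE2]

end AuxFY2
section AuxFY3

variable {X Y X1 X2 : Type*} [Fintype X] [Fintype Y] [Fintype X1] [Fintype X2] [DecidableEq Y]
variable {P : X → ℝ} {g : X → Y} {V1 : X → X1 → ℝ} {V2 : X → X1 → X2 → ℝ}
variable {d1 : X → X1 → ℝ} {d2 : X → X2 → ℝ} {R1 D1 D2 s t1 t2 : ℝ}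
variable {Q2s : Y → X1 → X2 → ℝ}

/-- The reciprocal of `β(x, g x | Q1, Q2)`. -/
noncomputable def bInv (g : X → Y) (d1 : X → X1 → ℝ) (d2 : X → X2 → ℝ) (s t1 t2 : ℝ)
    (Q1 : X1 → ℝ) (Q2 : Y → X1 → X2 → ℝ) (x : X) : ℝ :=
  ∑ a, Q1 a * Real.exp (-((t1 * d1 x a + Real.log (beta2 d2 t2 Q2 x (g x) a)) / (1 + s)))

lemma beta_eq_bInv (Q1 : X1 → ℝ) (Q2 : Y → X1 → X2 → ℝ) (x : X) :
    beta d1 d2 s t1 t2 Q1 Q2 x (g x) = (bInv g d1 d2 s t1 t2 Q1 Q2 x)⁻¹ := rfl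

lemma sum_pos_of_isPMF_weight {α : Type*} [Fintype α] {p : α → ℝ} (hp : IsPMF p)
    {f : α → ℝ} (hf : ∀ a, 0 < f a) : 0 < ∑ a, p a * f a := by
  obtain ⟨a0, ha0⟩ := exists_pos_of_sum_one hp.1 hp.2
  exact Finset.sum_pos' (fun a _ => mul_nonneg (hp.1 a) (hf a).le)
    ⟨a0, Finset.mem_univ _, mul_pos ha0 (hf a0)⟩

lemma bInv_pos {Q1 : X1 → ℝ} (hQ1 : IsPMF Q1) (Q2 : Y → X1 → X2 → ℝ) (x : X) :
    0 < bInv g d1 d2 s t1 t2 Q1 Q2 x :=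
  sum_pos_of_isPMF_weight hQ1 (fun _ => Real.exp_pos _)

/-- Rearrangement of the flat Lagrangian-type expression into nested form. -/
lemma flat_nested (W1 : X → X1 → ℝ) (W2 : X → X1 → X2 → ℝ) (F1 : X → X1 → ℝ)
    (F2 : X → X1 → X2 → ℝ) :
    (1 + s) * (∑ x, ∑ a, P x * W1 x a * F1 x a)
      + (∑ x, ∑ a, ∑ b, P x * W1 x a * W2 x a b * F2 x a b)
      + t1 * Ed1 P W1 d1 + t2 * Ed2 P W1 W2 d2
    = ∑ x, P x * ∑ a, W1 x a *
        ((1 + s) * F1 x a + t1 * d1 x a + ∑ b, W2 x a b * (F2 x a b + t2 * d2 x b)) := by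
  have expand : ∀ x, P x * ∑ a, W1 x a *
      ((1 + s) * F1 x a + t1 * d1 x a + ∑ b, W2 x a b * (F2 x a b + t2 * d2 x b))
      = (∑ a, (1 + s) * (P x * W1 x a * F1 x a)) + (∑ a, t1 * (P x * W1 x a * d1 x a))
        + ∑ a, ∑ b, (P x * W1 x a * W2 x a b * F2 x a b
            + t2 * (P x * W1 x a * W2 x a b * d2 x b)) := by
    intro x
    rw [Finset.mul_sum, ← Finset.sum_add_distrib, ← Finset.sum_add_distrib]
    refine Finset.sum_congr rfl fun a _ => ?_
    have hS : P x * W1 x a * (∑ b, W2 x a b * (F2 x a b + t2 * d2 x b))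
        = ∑ b, (P x * W1 x a * W2 x a b * F2 x a b
            + t2 * (P x * W1 x a * W2 x a b * d2 x b)) := by
      rw [Finset.mul_sum]
      exact Finset.sum_congr rfl fun b _ => by ring
    calc P x * (W1 x a *
          ((1 + s) * F1 x a + t1 * d1 x a + ∑ b, W2 x a b * (F2 x a b + t2 * d2 x b)))
        = (1 + s) * (P x * W1 x a * F1 x a) + t1 * (P x * W1 x a * d1 x a)
          + P x * W1 x a * (∑ b, W2 x a b * (F2 x a b + t2 * d2 x b)) := by ring
      _ = _ := by rw [hS]
  simp only [expand]
  rw [Finset.sum_add_distrib, Finset.sum_add_distrib]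
  have h1 : (1 + s) * (∑ x, ∑ a, P x * W1 x a * F1 x a)
      = ∑ x, ∑ a, (1 + s) * (P x * W1 x a * F1 x a) := by
    rw [Finset.mul_sum]
    exact Finset.sum_congr rfl fun x _ => by rw [Finset.mul_sum]
  have h2 : t1 * Ed1 P W1 d1 = ∑ x, ∑ a, t1 * (P x * W1 x a * d1 x a) := by
    rw [Ed1, Finset.mul_sum]
    exact Finset.sum_congr rfl fun x _ => by rw [Finset.mul_sum]
  have h3 : (∑ x, ∑ a, ∑ b, P x * W1 x a * W2 x a b * F2 x a b) + t2 * Ed2 P W1 W2 d2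
      = ∑ x, ∑ a, ∑ b, (P x * W1 x a * W2 x a b * F2 x a b
          + t2 * (P x * W1 x a * W2 x a b * d2 x b)) := by
    rw [Ed2, Finset.mul_sum, ← Finset.sum_add_distrib]
    refine Finset.sum_congr rfl fun x _ => ?_
    rw [Finset.mul_sum, ← Finset.sum_add_distrib]
    refine Finset.sum_congr rfl fun a _ => ?_
    rw [Finset.mul_sum, ← Finset.sum_add_distrib]
  rw [h1, h2] at *
  linarith [h3]

/-- Lower (Gibbs) bound on the Lagrangian at the optimizer, in terms of
`β(·|P*_{X̂₁}, Q2s)`. -/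
lemma LL_ge (hP : IsPMF P) (hs : 0 ≤ s)
    (hV1 : IsChan1 V1) (hV2 : IsChan2 V2)
    (hQ2s : ∀ y a, IsPMF (Q2s y a))
    (hind : ∀ y a, 0 < pYA P g V1 y a → ∀ b, Q2s y a b = pBgYA P g V1 V2 y a b) :
    -(1 + s) * (∑ x, P x * Real.log (bInv g d1 d2 s t1 t2 (pA P V1) Q2s x))
      ≤ (1 + s) * IX1 P V1 + IX2gYA P g V1 V2 + t1 * Ed1 P V1 d1 + t2 * Ed2 P V1 V2 d2 := by
  have hs1 : (0:ℝ) < 1 + s := by linarith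
  -- rewrite IX2gYA using Q2s
  have hIX2 : IX2gYA P g V1 V2 = ∑ x, ∑ a, ∑ b, P x * V1 x a * V2 x a b *
      Real.log (V2 x a b / Q2s (g x) a b) := by
    rw [IX2gYA]
    refine Finset.sum_congr rfl fun x _ => Finset.sum_congr rfl fun a _ =>
      Finset.sum_congr rfl fun b _ => ?_
    rcases (mul_nonneg (mul_nonneg (hP.1 x) ((hV1 x).1 a)) ((hV2 x a).1 b)).lt_or_eq
      with hpos | hzero
    · have hpYA : 0 < pYA P g V1 (g x) a := by
        have h1 : 0 < P x * V1 x a := by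
          rcases (mul_nonneg (hP.1 x) ((hV1 x).1 a)).lt_or_eq with h | h
          · exact h
          · exfalso; rw [← h] at hpos; simp at hpos
        exact lt_of_lt_of_le h1 (term_le_pYA hP hV1 x a)
      rw [hind (g x) a hpYA b]
    · rw [← hzero]; ring
  rw [IX1, hIX2, flat_nested]
  have key : ∀ x, P x * (-(1 + s) * Real.log (bInv g d1 d2 s t1 t2 (pA P V1) Q2s x))
      ≤ P x * ∑ a, V1 x a * ((1 + s) * Real.log (V1 x a / pA P V1 a) + t1 * d1 x a
        + ∑ b, V2 x a b * (Real.log (V2 x a b / Q2s (g x) a b) + t2 * d2 x b)) := by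
    intro x
    rcases (hP.1 x).lt_or_eq with hPx | hPx
    swap
    · rw [← hPx]; simp
    refine mul_le_mul_of_nonneg_left ?_ (le_of_lt hPx)
    -- per-a inner bound
    have inner_a : ∀ a, V1 x a * ((1 + s) * Real.log (V1 x a / pA P V1 a) + t1 * d1 x a
          + ∑ b, V2 x a b * (Real.log (V2 x a b / Q2s (g x) a b) + t2 * d2 x b))
        ≥ V1 x a * ((1 + s) * Real.log (V1 x a /
            (pA P V1 a * Real.exp (-((t1 * d1 x a
              + Real.log (beta2 d2 t2 Q2s x (g x) a)) / (1 + s)))))) := by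
      intro a
      rcases ((hV1 x).1 a).lt_or_eq with hVa | hVa
      swap
      · rw [← hVa]; simp
      refine mul_le_mul_of_nonneg_left ?_ (le_of_lt hVa)
      have hpA : 0 < pA P V1 a :=
        lt_of_lt_of_le (mul_pos hPx hVa) (term_le_pA hP hV1 x a)
      have hpYA : 0 < pYA P g V1 (g x) a :=
        lt_of_lt_of_le (mul_pos hPx hVa) (term_le_pYA hP hV1 x a)
      -- Gibbs on the inner b-sum
      set m := ∑ b, Q2s (g x) a b * Real.exp (-(t2 * d2 x b)) with hm
      have hm_pos : 0 < m :=
        sum_pos_of_isPMF_weight (hQ2s (g x) a) (fun _ => Real.exp_pos _)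
      have hb2 : Real.log (beta2 d2 t2 Q2s x (g x) a) = -Real.log m := by
        rw [beta2, Real.log_inv]
      have hinner : ∑ b, V2 x a b * (Real.log (V2 x a b / Q2s (g x) a b) + t2 * d2 x b)
          ≥ -Real.log m := by
        have hgibbs := gibbs (p := V2 x a)
          (q := fun b => Q2s (g x) a b * Real.exp (-(t2 * d2 x b)))
          (hV2 x a).1 (hV2 x a).2
          (fun b => mul_nonneg ((hQ2s (g x) a).1 b) (Real.exp_pos _).le)
          (fun b hb => by
            have hQpos : 0 < Q2s (g x) a b := by
              rw [hind (g x) a hpYA b, pBgYA]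
              exact div_pos (lt_of_lt_of_le (mul_pos (mul_pos hPx hVa) hb)
                (term_le_pYAB hP hV1 hV2 x a b)) hpYA
            exact mul_pos hQpos (Real.exp_pos _))
        rw [hm]
        refine le_trans hgibbs (le_of_eq (Finset.sum_congr rfl fun b _ => ?_))
        rcases ((hV2 x a).1 b).lt_or_eq with hWb | hWb
        · have hQpos : 0 < Q2s (g x) a b := by
            rw [hind (g x) a hpYA b, pBgYA]
            exact div_pos (lt_of_lt_of_le (mul_pos (mul_pos hPx hVa) hWb)
              (term_le_pYAB hP hV1 hV2 x a b)) hpYA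
          congr 1
          rw [Real.log_div (ne_of_gt hWb) (ne_of_gt (mul_pos hQpos (Real.exp_pos _))),
            Real.log_mul (ne_of_gt hQpos) (ne_of_gt (Real.exp_pos _)),
            Real.log_exp, Real.log_div (ne_of_gt hWb) (ne_of_gt hQpos)]
          ring
        · rw [← hWb]; simp
      have hlog : (1 + s) * Real.log (V1 x a /
            (pA P V1 a * Real.exp (-((t1 * d1 x a
              + Real.log (beta2 d2 t2 Q2s x (g x) a)) / (1 + s)))))
          = (1 + s) * Real.log (V1 x a / pA P V1 a) + t1 * d1 x a + (-Real.log m) := by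
        rw [Real.log_div (ne_of_gt hVa) (ne_of_gt (mul_pos hpA (Real.exp_pos _))),
          Real.log_mul (ne_of_gt hpA) (ne_of_gt (Real.exp_pos _)), Real.log_exp,
          Real.log_div (ne_of_gt hVa) (ne_of_gt hpA), hb2]
        field_simp
        ring
      rw [hlog]
      have := hinner
      linarith
    -- sum over a, then outer Gibbs
    have step1 : ∑ a, V1 x a * ((1 + s) * Real.log (V1 x a / pA P V1 a) + t1 * d1 x a
          + ∑ b, V2 x a b * (Real.log (V2 x a b / Q2s (g x) a b) + t2 * d2 x b))
        ≥ (1 + s) * ∑ a, V1 x a * Real.log (V1 x a /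
            (pA P V1 a * Real.exp (-((t1 * d1 x a
              + Real.log (beta2 d2 t2 Q2s x (g x) a)) / (1 + s))))) := by
      rw [Finset.mul_sum]
      refine Finset.sum_le_sum fun a _ => ?_
      have := inner_a a
      calc (1 + s) * (V1 x a * Real.log (V1 x a / (pA P V1 a * Real.exp (-((t1 * d1 x a
              + Real.log (beta2 d2 t2 Q2s x (g x) a)) / (1 + s))))))
          = V1 x a * ((1 + s) * Real.log (V1 x a / (pA P V1 a * Real.exp (-((t1 * d1 x a
              + Real.log (beta2 d2 t2 Q2s x (g x) a)) / (1 + s)))))) := by ring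
        _ ≤ _ := this
    have step2 : ∑ a, V1 x a * Real.log (V1 x a /
          (pA P V1 a * Real.exp (-((t1 * d1 x a
            + Real.log (beta2 d2 t2 Q2s x (g x) a)) / (1 + s)))))
        ≥ -Real.log (bInv g d1 d2 s t1 t2 (pA P V1) Q2s x) := by
      have hgibbs := gibbs (p := V1 x)
        (q := fun a => pA P V1 a * Real.exp (-((t1 * d1 x a
          + Real.log (beta2 d2 t2 Q2s x (g x) a)) / (1 + s))))
        (hV1 x).1 (hV1 x).2
        (fun a => mul_nonneg (pA_nonneg hP hV1 a) (Real.exp_pos _).le)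
        (fun a ha => mul_pos
          (lt_of_lt_of_le (mul_pos hPx ha) (term_le_pA hP hV1 x a)) (Real.exp_pos _))
      exact hgibbs
    calc -(1 + s) * Real.log (bInv g d1 d2 s t1 t2 (pA P V1) Q2s x)
        = (1 + s) * (-Real.log (bInv g d1 d2 s t1 t2 (pA P V1) Q2s x)) := by ring
      _ ≤ (1 + s) * ∑ a, V1 x a * Real.log (V1 x a /
            (pA P V1 a * Real.exp (-((t1 * d1 x a
              + Real.log (beta2 d2 t2 Q2s x (g x) a)) / (1 + s))))) :=
          mul_le_mul_of_nonneg_left step2 (le_of_lt hs1)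
      _ ≤ _ := step1
  calc -(1 + s) * (∑ x, P x * Real.log (bInv g d1 d2 s t1 t2 (pA P V1) Q2s x))
      = ∑ x, P x * (-(1 + s) * Real.log (bInv g d1 d2 s t1 t2 (pA P V1) Q2s x)) := by
        rw [Finset.mul_sum]
        exact Finset.sum_congr rfl fun x _ => by ring
    _ ≤ _ := Finset.sum_le_sum fun x _ => key x

end AuxFY3
section AuxFY4

variable {X Y X1 X2 : Type*} [Fintype X] [Fintype Y] [Fintype X1] [Fintype X2] [DecidableEq Y]
variable {P : X → ℝ} {g : X → Y} {V1 : X → X1 → ℝ} {V2 : X → X1 → X2 → ℝ}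
variable {d1 : X → X1 → ℝ} {d2 : X → X2 → ℝ} {R1 D1 D2 s t1 t2 : ℝ}
variable {Q2s : Y → X1 → X2 → ℝ}

lemma exists_pos_term {α : Type*} [Fintype α] {f : α → ℝ} (h0 : ∀ a, 0 ≤ f a)
    (hpos : 0 < ∑ a, f a) : ∃ a, 0 < f a := by
  by_contra h
  push_neg at h
  have hz : ∑ a, f a = 0 := Finset.sum_eq_zero fun a _ => le_antisymm (h a) (h0 a)
  rw [hz] at hpos; exact lt_irrefl 0 hpos

/-- `I(X;X̂₁)` compared with the relative entropy against an arbitrary marginal. -/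
lemma IX1_le_KL {W1 : X → X1 → ℝ} (hP : IsPMF P) (hW1 : IsChan1 W1) {Q1 : X1 → ℝ}
    (hQ1 : IsPMF Q1) (habs : ∀ x a, 0 < W1 x a → 0 < Q1 a) :
    IX1 P W1 ≤ ∑ x, ∑ a, P x * W1 x a * Real.log (W1 x a / Q1 a) := by
  have hsplit : ∀ x a, P x * W1 x a * Real.log (W1 x a / pA P W1 a)
      = P x * W1 x a * Real.log (W1 x a / Q1 a)
        + P x * W1 x a * Real.log (Q1 a / pA P W1 a) := by
    intro x a
    rcases (mul_nonneg (hP.1 x) ((hW1 x).1 a)).lt_or_eq with hpos | hzero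
    · have hPx : 0 < P x := by
        rcases (hP.1 x).lt_or_eq with h | h
        · exact h
        · exfalso; rw [← h] at hpos; simp at hpos
      have hWa : 0 < W1 x a := by
        rcases ((hW1 x).1 a).lt_or_eq with h | h
        · exact h
        · exfalso; rw [← h] at hpos; simp at hpos
      have hpA : 0 < pA P W1 a := lt_of_lt_of_le hpos (term_le_pA hP hW1 x a)
      have hQ : 0 < Q1 a := habs x a hWa
      rw [← mul_add]
      congr 1
      rw [Real.log_div (ne_of_gt hWa) (ne_of_gt hpA),
        Real.log_div (ne_of_gt hWa) (ne_of_gt hQ),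
        Real.log_div (ne_of_gt hQ) (ne_of_gt hpA)]
      ring
    · rw [← hzero]; ring
  rw [IX1]
  simp only [hsplit, Finset.sum_add_distrib]
  have hB : ∑ x, ∑ a, P x * W1 x a * Real.log (Q1 a / pA P W1 a) ≤ 0 := by
    rw [Finset.sum_comm]
    have hgrp : ∀ a, ∑ x, P x * W1 x a * Real.log (Q1 a / pA P W1 a)
        = pA P W1 a * Real.log (Q1 a / pA P W1 a) := by
      intro a
      rw [pA, Finset.sum_mul]
    simp only [hgrp]
    have hle : ∀ a, pA P W1 a * Real.log (Q1 a / pA P W1 a) ≤ Q1 a - pA P W1 a := by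
      intro a
      rcases (pA_nonneg hP hW1 a).lt_or_eq with hpa | hpa
      · obtain ⟨x, hx⟩ := exists_pos_term
          (f := fun x => P x * W1 x a)
          (fun x => mul_nonneg (hP.1 x) ((hW1 x).1 a)) hpa
        have hWx : 0 < W1 x a := by
          rcases ((hW1 x).1 a).lt_or_eq with h | h
          · exact h
          · exfalso; rw [← h] at hx; simp at hx
        have hQ : 0 < Q1 a := habs x a hWx
        have h1 : Real.log (Q1 a / pA P W1 a) ≤ Q1 a / pA P W1 a - 1 :=
          Real.log_le_sub_one_of_pos (div_pos hQ hpa)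
        calc pA P W1 a * Real.log (Q1 a / pA P W1 a)
            ≤ pA P W1 a * (Q1 a / pA P W1 a - 1) :=
              mul_le_mul_of_nonneg_left h1 (le_of_lt hpa)
          _ = Q1 a - pA P W1 a := by field_simp
      · rw [← hpa]; simpa using hQ1.1 a
    have hsum := Finset.sum_le_sum (fun a (_ : a ∈ Finset.univ) => hle a)
    rw [Finset.sum_sub_distrib, hQ1.2, sum_pA hP hW1] at hsum
    linarith
  linarith

/-- `I(X;X̂₂|Y,X̂₁)` compared with the relative entropy against an arbitrary
conditional marginal. -/
lemma IX2_le_KL {W1 : X → X1 → ℝ} {W2 : X → X1 → X2 → ℝ} (hP : IsPMF P)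
    (hW1 : IsChan1 W1) (hW2 : IsChan2 W2) {Q2 : Y → X1 → X2 → ℝ}
    (hQ2 : ∀ y a, IsPMF (Q2 y a))
    (habs : ∀ x a b, 0 < W2 x a b → 0 < Q2 (g x) a b) :
    IX2gYA P g W1 W2
      ≤ ∑ x, ∑ a, ∑ b, P x * W1 x a * W2 x a b * Real.log (W2 x a b / Q2 (g x) a b) := by
  have hsplit : ∀ x a b, P x * W1 x a * W2 x a b *
        Real.log (W2 x a b / pBgYA P g W1 W2 (g x) a b)
      = P x * W1 x a * W2 x a b * Real.log (W2 x a b / Q2 (g x) a b)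
        + P x * W1 x a * W2 x a b *
          Real.log (Q2 (g x) a b / pBgYA P g W1 W2 (g x) a b) := by
    intro x a b
    rcases (mul_nonneg (mul_nonneg (hP.1 x) ((hW1 x).1 a)) ((hW2 x a).1 b)).lt_or_eq
      with hpos | hzero
    · have hPW : 0 < P x * W1 x a := by
        rcases (mul_nonneg (hP.1 x) ((hW1 x).1 a)).lt_or_eq with h | h
        · exact h
        · exfalso; rw [← h] at hpos; simp at hpos
      have hWb : 0 < W2 x a b := by
        rcases ((hW2 x a).1 b).lt_or_eq with h | h
        · exact h
        · exfalso; rw [← h] at hpos; simp at hpos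
      have hpYA : 0 < pYA P g W1 (g x) a :=
        lt_of_lt_of_le hPW (term_le_pYA hP hW1 x a)
      have hpYAB : 0 < pYAB P g W1 W2 (g x) a b :=
        lt_of_lt_of_le hpos (term_le_pYAB hP hW1 hW2 x a b)
      have hpB : 0 < pBgYA P g W1 W2 (g x) a b := by
        rw [pBgYA]; exact div_pos hpYAB hpYA
      have hQ : 0 < Q2 (g x) a b := habs x a b hWb
      rw [← mul_add]
      congr 1
      rw [Real.log_div (ne_of_gt hWb) (ne_of_gt hpB),
        Real.log_div (ne_of_gt hWb) (ne_of_gt hQ),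
        Real.log_div (ne_of_gt hQ) (ne_of_gt hpB)]
      ring
    · rw [← hzero]; ring
  rw [IX2gYA]
  simp only [hsplit, Finset.sum_add_distrib]
  have hB : ∑ x, ∑ a, ∑ b, P x * W1 x a * W2 x a b *
      Real.log (Q2 (g x) a b / pBgYA P g W1 W2 (g x) a b) ≤ 0 := by
    have hgrp : ∑ x, ∑ a, ∑ b, P x * W1 x a * W2 x a b *
        Real.log (Q2 (g x) a b / pBgYA P g W1 W2 (g x) a b)
        = ∑ a, ∑ y, ∑ b, pYAB P g W1 W2 y a b *
            Real.log (Q2 y a b / pBgYA P g W1 W2 y a b) := by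
      rw [Finset.sum_comm]
      refine Finset.sum_congr rfl fun a _ => ?_
      rw [Finset.sum_comm]
      rw [show (∑ b, ∑ x, P x * W1 x a * W2 x a b *
          Real.log (Q2 (g x) a b / pBgYA P g W1 W2 (g x) a b))
        = ∑ b, ∑ y, ∑ x, (if g x = y then P x * W1 x a * W2 x a b *
            Real.log (Q2 y a b / pBgYA P g W1 W2 y a b) else 0) from ?_]
      · rw [Finset.sum_comm]
        refine Finset.sum_congr rfl fun y _ => Finset.sum_congr rfl fun b _ => ?_
        rw [pYAB, Finset.sum_mul]
        refine Finset.sum_congr rfl fun x _ => ?_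
        by_cases h : g x = y <;> simp [h]
      · refine Finset.sum_congr rfl fun b _ => ?_
        rw [sum_collapse (g := g) (f := fun x y => P x * W1 x a * W2 x a b *
          Real.log (Q2 y a b / pBgYA P g W1 W2 y a b))]
    rw [hgrp]
    refine Finset.sum_nonpos fun a _ => Finset.sum_nonpos fun y _ => ?_
    have hle : ∀ b, pYAB P g W1 W2 y a b * Real.log (Q2 y a b / pBgYA P g W1 W2 y a b)
        ≤ pYA P g W1 y a * Q2 y a b - pYAB P g W1 W2 y a b := by
      intro b
      rcases (pYAB_nonneg hP hW1 hW2 y a b).lt_or_eq with hpab | hpab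
      · have hpYA : 0 < pYA P g W1 y a := by
          rw [← sum_pYAB hW2 y a]
          exact lt_of_lt_of_le hpab (Finset.single_le_sum
            (f := fun b' => pYAB P g W1 W2 y a b')
            (fun b' _ => pYAB_nonneg hP hW1 hW2 y a b') (Finset.mem_univ b))
        have hpB : 0 < pBgYA P g W1 W2 y a b := by
          rw [pBgYA]; exact div_pos hpab hpYA
        have hQ : 0 < Q2 y a b := by
          obtain ⟨x, hx⟩ := exists_pos_term
            (f := fun x => if g x = y then P x * W1 x a * W2 x a b else 0)
            (fun x => by
              split_ifs
              · exact mul_nonneg (mul_nonneg (hP.1 x) ((hW1 x).1 a)) ((hW2 x a).1 b)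
              · exact le_refl 0) hpab
          by_cases h : g x = y
          · rw [if_pos h] at hx
            have hWb : 0 < W2 x a b := by
              rcases ((hW2 x a).1 b).lt_or_eq with h' | h'
              · exact h'
              · exfalso; rw [← h'] at hx; simp at hx
            have := habs x a b hWb
            rwa [h] at this
          · rw [if_neg h] at hx; exact absurd hx (lt_irrefl 0)
        have h1 : Real.log (Q2 y a b / pBgYA P g W1 W2 y a b)
            ≤ Q2 y a b / pBgYA P g W1 W2 y a b - 1 :=
          Real.log_le_sub_one_of_pos (div_pos hQ hpB)
        calc pYAB P g W1 W2 y a b * Real.log (Q2 y a b / pBgYA P g W1 W2 y a b)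
            ≤ pYAB P g W1 W2 y a b * (Q2 y a b / pBgYA P g W1 W2 y a b - 1) :=
              mul_le_mul_of_nonneg_left h1 (le_of_lt hpab)
          _ = pYA P g W1 y a * Q2 y a b - pYAB P g W1 W2 y a b := by
              rw [pBgYA]
              field_simp
      · rw [← hpab]
        simp only [zero_mul, zero_sub, sub_zero]
        exact mul_nonneg (pYA_nonneg hP hW1 y a) ((hQ2 y a).1 b)
    have hsum := Finset.sum_le_sum (fun b (_ : b ∈ Finset.univ) => hle b)
    rw [Finset.sum_sub_distrib, ← Finset.mul_sum, (hQ2 y a).2, mul_one,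
      sum_pYAB hW2] at hsum
    linarith
  linarith

end AuxFY4
section AuxFY5

variable {X Y X1 X2 : Type*} [Fintype X] [Fintype Y] [Fintype X1] [Fintype X2] [DecidableEq Y]
variable {P : X → ℝ} {g : X → Y} {V1 : X → X1 → ℝ} {V2 : X → X1 → X2 → ℝ}
variable {d1 : X → X1 → ℝ} {d2 : X → X2 → ℝ} {R1 D1 D2 s t1 t2 : ℝ}
variable {Q2s : Y → X1 → X2 → ℝ}

/-- The tilted second channel built from `Q2`. -/
noncomputable def tiltW2 (g : X → Y) (d2 : X → X2 → ℝ) (t2 : ℝ)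
    (Q2 : Y → X1 → X2 → ℝ) : X → X1 → X2 → ℝ := fun x a b =>
  Q2 (g x) a b * Real.exp (-(t2 * d2 x b))
    / (∑ b', Q2 (g x) a b' * Real.exp (-(t2 * d2 x b')))

/-- The tilted first channel built from `(Q1, Q2)`. -/
noncomputable def tiltW1 (g : X → Y) (d1 : X → X1 → ℝ) (d2 : X → X2 → ℝ) (s t1 t2 : ℝ)
    (Q1 : X1 → ℝ) (Q2 : Y → X1 → X2 → ℝ) : X → X1 → ℝ := fun x a =>
  Q1 a * Real.exp (-((t1 * d1 x a + Real.log (beta2 d2 t2 Q2 x (g x) a)) / (1 + s)))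
    / bInv g d1 d2 s t1 t2 Q1 Q2 x

lemma mQ_pos {Q2 : Y → X1 → X2 → ℝ} (hQ2 : ∀ y a, IsPMF (Q2 y a)) (x : X) (a : X1) :
    0 < ∑ b, Q2 (g x) a b * Real.exp (-(t2 * d2 x b)) :=
  sum_pos_of_isPMF_weight (hQ2 (g x) a) fun _ => Real.exp_pos _

lemma isChan2_tiltW2 {Q2 : Y → X1 → X2 → ℝ} (hQ2 : ∀ y a, IsPMF (Q2 y a)) :
    IsChan2 (tiltW2 g d2 t2 Q2) := by
  intro x a
  constructor
  · intro b
    exact div_nonneg (mul_nonneg ((hQ2 (g x) a).1 b) (Real.exp_pos _).le)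
      (mQ_pos hQ2 x a).le
  · rw [show (∑ b, tiltW2 g d2 t2 Q2 x a b)
        = (∑ b, Q2 (g x) a b * Real.exp (-(t2 * d2 x b)))
          / (∑ b', Q2 (g x) a b' * Real.exp (-(t2 * d2 x b'))) from by
      rw [Finset.sum_div]; rfl]
    exact div_self (ne_of_gt (mQ_pos hQ2 x a))

lemma isChan1_tiltW1 {Q1 : X1 → ℝ} (hQ1 : IsPMF Q1) (Q2 : Y → X1 → X2 → ℝ) :
    IsChan1 (tiltW1 g d1 d2 s t1 t2 Q1 Q2) := by
  intro x
  constructor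
  · intro a
    exact div_nonneg (mul_nonneg (hQ1.1 a) (Real.exp_pos _).le)
      (bInv_pos hQ1 Q2 x).le
  · rw [show (∑ a, tiltW1 g d1 d2 s t1 t2 Q1 Q2 x a)
        = bInv g d1 d2 s t1 t2 Q1 Q2 x / bInv g d1 d2 s t1 t2 Q1 Q2 x from by
      rw [show bInv g d1 d2 s t1 t2 Q1 Q2 x
          = ∑ a, Q1 a * Real.exp (-((t1 * d1 x a
              + Real.log (beta2 d2 t2 Q2 x (g x) a)) / (1 + s))) from rfl,
        Finset.sum_div]
      rfl]
    exact div_self (ne_of_gt (bInv_pos hQ1 Q2 x))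

lemma tiltW1_pos_imp {Q1 : X1 → ℝ} (hQ1 : IsPMF Q1) (Q2 : Y → X1 → X2 → ℝ)
    {x : X} {a : X1} (h : 0 < tiltW1 g d1 d2 s t1 t2 Q1 Q2 x a) : 0 < Q1 a := by
  by_contra hq
  push_neg at hq
  have hq0 : Q1 a = 0 := le_antisymm hq (hQ1.1 a)
  simp only [tiltW1] at h
  rw [hq0] at h
  simp at h

lemma tiltW2_pos_imp {Q2 : Y → X1 → X2 → ℝ} (hQ2 : ∀ y a, IsPMF (Q2 y a))
    {x : X} {a : X1} {b : X2} (h : 0 < tiltW2 g d2 t2 Q2 x a b) :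
    0 < Q2 (g x) a b := by
  by_contra hq
  push_neg at hq
  have hq0 : Q2 (g x) a b = 0 := le_antisymm hq ((hQ2 (g x) a).1 b)
  simp only [tiltW2] at h
  rw [hq0] at h
  simp at h

/-- Exact evaluation of the flat Lagrangian-type expression at the tilted channels. -/
lemma tilt_eval (hP : IsPMF P) (hs : 0 ≤ s) {Q1 : X1 → ℝ} (hQ1 : IsPMF Q1)
    {Q2 : Y → X1 → X2 → ℝ} (hQ2 : ∀ y a, IsPMF (Q2 y a)) :
    (1 + s) * (∑ x, ∑ a, P x * tiltW1 g d1 d2 s t1 t2 Q1 Q2 x a *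
        Real.log (tiltW1 g d1 d2 s t1 t2 Q1 Q2 x a / Q1 a))
      + (∑ x, ∑ a, ∑ b, P x * tiltW1 g d1 d2 s t1 t2 Q1 Q2 x a *
          tiltW2 g d2 t2 Q2 x a b *
          Real.log (tiltW2 g d2 t2 Q2 x a b / Q2 (g x) a b))
      + t1 * Ed1 P (tiltW1 g d1 d2 s t1 t2 Q1 Q2) d1
      + t2 * Ed2 P (tiltW1 g d1 d2 s t1 t2 Q1 Q2) (tiltW2 g d2 t2 Q2) d2
    = -(1 + s) * (∑ x, P x * Real.log (bInv g d1 d2 s t1 t2 Q1 Q2 x)) := by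
  have hs1 : (0:ℝ) < 1 + s := by linarith
  rw [flat_nested]
  have hW1 := isChan1_tiltW1 (g := g) (d1 := d1) (d2 := d2) (s := s) (t1 := t1) (t2 := t2) hQ1 Q2
  have hW2 := isChan2_tiltW2 (g := g) (t2 := t2) (d2 := d2) hQ2
  have hx : ∀ x, ∑ a, tiltW1 g d1 d2 s t1 t2 Q1 Q2 x a *
      ((1 + s) * Real.log (tiltW1 g d1 d2 s t1 t2 Q1 Q2 x a / Q1 a) + t1 * d1 x a
        + ∑ b, tiltW2 g d2 t2 Q2 x a b *
          (Real.log (tiltW2 g d2 t2 Q2 x a b / Q2 (g x) a b) + t2 * d2 x b))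
      = -(1 + s) * Real.log (bInv g d1 d2 s t1 t2 Q1 Q2 x) := by
    intro x
    have hb : ∀ a, ∑ b, tiltW2 g d2 t2 Q2 x a b *
        (Real.log (tiltW2 g d2 t2 Q2 x a b / Q2 (g x) a b) + t2 * d2 x b)
        = -Real.log (∑ b', Q2 (g x) a b' * Real.exp (-(t2 * d2 x b'))) := by
      intro a
      have hterm : ∀ b, tiltW2 g d2 t2 Q2 x a b *
          (Real.log (tiltW2 g d2 t2 Q2 x a b / Q2 (g x) a b) + t2 * d2 x b)
          = tiltW2 g d2 t2 Q2 x a b *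
            (-Real.log (∑ b', Q2 (g x) a b' * Real.exp (-(t2 * d2 x b')))) := by
        intro b
        rcases ((hW2 x a).1 b).lt_or_eq with hw | hw
        · have hq : 0 < Q2 (g x) a b := tiltW2_pos_imp hQ2 hw
          have hmp := mQ_pos (g := g) (t2 := t2) (d2 := d2) hQ2 x a
          congr 1
          have hWQ : tiltW2 g d2 t2 Q2 x a b / Q2 (g x) a b
              = Real.exp (-(t2 * d2 x b))
                / (∑ b', Q2 (g x) a b' * Real.exp (-(t2 * d2 x b'))) := by
            simp only [tiltW2]
            field_simp
          rw [hWQ, Real.log_div (ne_of_gt (Real.exp_pos _)) (ne_of_gt hmp), Real.log_exp]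
          ring
        · rw [← hw]; simp
      simp only [hterm]
      rw [← Finset.sum_mul, (hW2 x a).2, one_mul]
    have ha : ∀ a, tiltW1 g d1 d2 s t1 t2 Q1 Q2 x a *
        ((1 + s) * Real.log (tiltW1 g d1 d2 s t1 t2 Q1 Q2 x a / Q1 a) + t1 * d1 x a
          + (-Real.log (∑ b', Q2 (g x) a b' * Real.exp (-(t2 * d2 x b')))))
        = tiltW1 g d1 d2 s t1 t2 Q1 Q2 x a *
            (-(1 + s) * Real.log (bInv g d1 d2 s t1 t2 Q1 Q2 x)) := by
      intro a
      rcases ((hW1 x).1 a).lt_or_eq with hw | hw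
      · have hq : 0 < Q1 a := tiltW1_pos_imp hQ1 Q2 hw
        have hbp := bInv_pos (g := g) (d1 := d1) (d2 := d2) (s := s) (t1 := t1) (t2 := t2) hQ1 Q2 x
        have hmp := mQ_pos (g := g) (t2 := t2) (d2 := d2) hQ2 x a
        congr 1
        have hWQ : tiltW1 g d1 d2 s t1 t2 Q1 Q2 x a / Q1 a
            = Real.exp (-((t1 * d1 x a + Real.log (beta2 d2 t2 Q2 x (g x) a)) / (1 + s)))
              / bInv g d1 d2 s t1 t2 Q1 Q2 x := by
          simp only [tiltW1]
          field_simp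
        rw [hWQ, Real.log_div (ne_of_gt (Real.exp_pos _)) (ne_of_gt hbp), Real.log_exp]
        have hb2 : Real.log (beta2 d2 t2 Q2 x (g x) a)
            = -Real.log (∑ b', Q2 (g x) a b' * Real.exp (-(t2 * d2 x b'))) := by
          rw [beta2, Real.log_inv]
        rw [hb2]
        field_simp
        ring
      · rw [← hw]; simp
    simp only [hb, ha]
    rw [← Finset.sum_mul, (hW1 x).2, one_mul]
  simp only [hx]
  rw [Finset.mul_sum]
  exact Finset.sum_congr rfl fun x _ => by ring

/-- Upper bound on the optimal Lagrangian via the tilted channels of `(Q1, Q2)`. -/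
lemma LL_le (hP : IsPMF P) (hpY : ∀ y, 0 < pY P g y)
    (hd1 : ∀ x a, 0 ≤ d1 x a) (hd2 : ∀ x b, 0 ≤ d2 x b)
    (hdual : DualOpt P g d1 d2 R1 D1 D2 s t1 t2)
    (hach : Achieves P g d1 d2 R1 D1 D2 V1 V2)
    {Q1 : X1 → ℝ} (hQ1 : IsPMF Q1) {Q2 : Y → X1 → X2 → ℝ} (hQ2 : ∀ y a, IsPMF (Q2 y a)) :
    (1 + s) * IX1 P V1 + IX2gYA P g V1 V2 + t1 * Ed1 P V1 d1 + t2 * Ed2 P V1 V2 d2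
      ≤ -(1 + s) * (∑ x, P x * Real.log (bInv g d1 d2 s t1 t2 Q1 Q2 x)) := by
  have hs := hdual.1
  have hs1 : (0:ℝ) < 1 + s := by linarith
  have hW1 := isChan1_tiltW1 (g := g) (d1 := d1) (d2 := d2) (s := s) (t1 := t1) (t2 := t2) hQ1 Q2
  have hW2 := isChan2_tiltW2 (g := g) (t2 := t2) (d2 := d2) hQ2
  have hmin := LL_min hP hpY hd1 hd2 hdual hach _ _ hW1 hW2
  have hKL1 := IX1_le_KL hP hW1 hQ1
    (fun x a h => tiltW1_pos_imp hQ1 Q2 h)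
  have hKL2 := IX2_le_KL hP hW1 hW2 hQ2
    (fun x a b h => tiltW2_pos_imp hQ2 h)
  have heval := tilt_eval (P := P) (g := g) (d1 := d1) (d2 := d2)
    (t1 := t1) (t2 := t2) hP hs hQ1 hQ2
  have h4 : (1 + s) * IX1 P (tiltW1 g d1 d2 s t1 t2 Q1 Q2)
      ≤ (1 + s) * (∑ x, ∑ a, P x * tiltW1 g d1 d2 s t1 t2 Q1 Q2 x a *
        Real.log (tiltW1 g d1 d2 s t1 t2 Q1 Q2 x a / Q1 a)) :=
    mul_le_mul_of_nonneg_left hKL1 hs1.le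
  linarith [hmin, h4, hKL2, heval]

/-- The key variational inequality: the optimal `(pA, Q2s)` maximizes
`∑ₓ P x · log bInv`. -/
lemma key_ineq (hP : IsPMF P) (hpY : ∀ y, 0 < pY P g y)
    (hd1 : ∀ x a, 0 ≤ d1 x a) (hd2 : ∀ x b, 0 ≤ d2 x b)
    (hdual : DualOpt P g d1 d2 R1 D1 D2 s t1 t2)
    (hach : Achieves P g d1 d2 R1 D1 D2 V1 V2)
    (hQ2s : ∀ y a, IsPMF (Q2s y a))
    (hind : ∀ y a, 0 < pYA P g V1 y a → ∀ b, Q2s y a b = pBgYA P g V1 V2 y a b)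
    {Q1 : X1 → ℝ} (hQ1 : IsPMF Q1) {Q2 : Y → X1 → X2 → ℝ} (hQ2 : ∀ y a, IsPMF (Q2 y a)) :
    ∑ x, P x * Real.log (bInv g d1 d2 s t1 t2 Q1 Q2 x)
      ≤ ∑ x, P x * Real.log (bInv g d1 d2 s t1 t2 (pA P V1) Q2s x) := by
  have hs := hdual.1
  have hs1 : (0:ℝ) < 1 + s := by linarith
  have h1 := LL_ge (d1 := d1) (d2 := d2) (s := s) (t1 := t1) (t2 := t2)
    hP hs hach.1 hach.2.1 hQ2s hind
  have h2 := LL_le hP hpY hd1 hd2 hdual hach hQ1 hQ2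
  have e1 : -(1 + s) * (∑ x, P x * Real.log (bInv g d1 d2 s t1 t2 (pA P V1) Q2s x))
      = -((1 + s) * (∑ x, P x * Real.log (bInv g d1 d2 s t1 t2 (pA P V1) Q2s x))) := by ring
  have e2 : -(1 + s) * (∑ x, P x * Real.log (bInv g d1 d2 s t1 t2 Q1 Q2 x))
      = -((1 + s) * (∑ x, P x * Real.log (bInv g d1 d2 s t1 t2 Q1 Q2 x))) := by ring
  rw [e1] at h1
  rw [e2] at h2
  have h3 : (1 + s) * (∑ x, P x * Real.log (bInv g d1 d2 s t1 t2 Q1 Q2 x))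
      ≤ (1 + s) * (∑ x, P x * Real.log (bInv g d1 d2 s t1 t2 (pA P V1) Q2s x)) := by
    linarith
  exact le_of_mul_le_mul_left h3 hs1
end AuxFY5
section AuxFY6

variable {X Y X1 X2 : Type*} [Fintype X] [Fintype Y] [Fintype X1] [Fintype X2] [DecidableEq Y]
variable {P : X → ℝ} {g : X → Y} {V1 : X → X1 → ℝ} {V2 : X → X1 → X2 → ℝ}
variable {d1 : X → X1 → ℝ} {d2 : X → X2 → ℝ} {R1 D1 D2 s t1 t2 : ℝ}
variable {Q2s : Y → X1 → X2 → ℝ}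

/-- `m(x) = β₂(x, g x, a₀ | Q2)⁻¹`. -/
noncomputable def mB (g : X → Y) (d2 : X → X2 → ℝ) (t2 : ℝ) (Q2 : Y → X1 → X2 → ℝ)
    (a0 : X1) (x : X) : ℝ := ∑ b, Q2 (g x) a0 b * Real.exp (-(t2 * d2 x b))

/-- `e(x) = exp((log m(x) - t₁ d₁(x,a₀))/(1+s))`. -/
noncomputable def eF (g : X → Y) (d1 : X → X1 → ℝ) (d2 : X → X2 → ℝ) (s t1 t2 : ℝ)
    (Q2s : Y → X1 → X2 → ℝ) (a0 : X1) (x : X) : ℝ :=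
  Real.exp ((Real.log (mB g d2 t2 Q2s a0 x) - t1 * d1 x a0) / (1 + s))

lemma mB_pos {Q2 : Y → X1 → X2 → ℝ} (hQ2 : ∀ y a, IsPMF (Q2 y a)) (a0 : X1) (x : X) :
    0 < mB g d2 t2 Q2 a0 x :=
  sum_pos_of_isPMF_weight (hQ2 (g x) a0) fun _ => Real.exp_pos _

lemma log_beta2_eq (Q2 : Y → X1 → X2 → ℝ) (a0 : X1) (x : X) :
    Real.log (beta2 d2 t2 Q2 x (g x) a0) = -Real.log (mB g d2 t2 Q2 a0 x) := by
  rw [beta2, Real.log_inv]; rfl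

lemma eF_eq_E1 (Q2s : Y → X1 → X2 → ℝ) (a0 : X1) (x : X) :
    eF g d1 d2 s t1 t2 Q2s a0 x
      = Real.exp (-((t1 * d1 x a0 + Real.log (beta2 d2 t2 Q2s x (g x) a0)) / (1 + s))) := by
  rw [eF, log_beta2_eq]
  congr 1
  ring

lemma collapse_ite (P : X → ℝ) (g : X → Y) (F : X → Y → ℝ) (x : X) :
    (∑ y, (if g x = y then P x else 0) * F x y) = P x * F x (g x) := by
  rw [show (∑ y, (if g x = y then P x else 0) * F x y)
      = ∑ y, (if g x = y then P x * F x y else 0) from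
    Finset.sum_congr rfl fun y _ => by split_ifs <;> simp]
  rw [Finset.sum_ite_eq]
  simp

/-- Derivative of the basic mixture-exponential. -/
lemma hasDeriv_mix {mm vv td s : ℝ} (hm : 0 < mm) (hs1 : (0:ℝ) < 1 + s) :
    HasDerivAt (fun δ : ℝ =>
        Real.exp ((Real.log ((1 - δ) * mm + δ * vv) - td) / (1 + s)))
      (Real.exp ((Real.log mm - td) / (1 + s)) * ((vv - mm) / mm) / (1 + s)) 0 := by
  have h1 : HasDerivAt (fun δ : ℝ => (1 - δ) * mm + δ * vv) (vv - mm) 0 := by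
    have ha := ((hasDerivAt_id (0:ℝ)).const_sub 1).mul_const mm
    have hb := (hasDerivAt_id (0:ℝ)).mul_const vv
    have hab := ha.add hb
    exact hab.congr_deriv (by ring)
  have hval : (1 - (0:ℝ)) * mm + 0 * vv = mm := by ring
  have h2 : HasDerivAt (fun δ : ℝ => Real.log ((1 - δ) * mm + δ * vv))
      ((vv - mm) / mm) 0 := by
    have := h1.log (by rw [hval]; exact ne_of_gt hm)
    rwa [hval] at this
  have h3 := ((h2.sub_const td).div_const (1 + s)).exp
  convert h3 using 1
  rw [hval]
  ring

/-- Derivative of the log of the perturbed `bInv`. -/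
lemma hasDeriv_logmix {u0 pa e0 mm vv td s : ℝ} (hm : 0 < mm) (hu : 0 < u0)
    (hs1 : (0:ℝ) < 1 + s) (he0 : e0 = Real.exp ((Real.log mm - td) / (1 + s))) :
    HasDerivAt (fun δ : ℝ => Real.log (u0 + pa *
        (Real.exp ((Real.log ((1 - δ) * mm + δ * vv) - td) / (1 + s)) - e0)))
      (pa * e0 * ((vv - mm) / mm) / (1 + s) / u0) 0 := by
  have hval : (1 - (0:ℝ)) * mm + 0 * vv = mm := by ring
  have h1 := (((hasDeriv_mix hm hs1 (vv := vv) (td := td)).sub_const e0).const_mul pa).const_add u0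
  have hne : u0 + pa * (Real.exp ((Real.log ((1 - (0:ℝ)) * mm + 0 * vv) - td) / (1 + s)) - e0)
      ≠ 0 := by
    rw [hval, ← he0]
    simp [ne_of_gt hu]
  have h2 := h1.log hne
  convert h2 using 1
  rw [hval, ← he0]
  simp
  ring

/-- Core estimate: `w₁(a₀) ≤ 1`. -/
lemma w1_core (hP : IsPMF P) (hpY : ∀ y, 0 < pY P g y)
    (hd1 : ∀ x a, 0 ≤ d1 x a) (hd2 : ∀ x b, 0 ≤ d2 x b)
    (hdual : DualOpt P g d1 d2 R1 D1 D2 s t1 t2)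
    (hach : Achieves P g d1 d2 R1 D1 D2 V1 V2)
    (hQ2s : ∀ y a, IsPMF (Q2s y a))
    (hind : ∀ y a, 0 < pYA P g V1 y a → ∀ b, Q2s y a b = pBgYA P g V1 V2 y a b)
    (a0 : X1) :
    ∑ x, P x * (eF g d1 d2 s t1 t2 Q2s a0 x / bInv g d1 d2 s t1 t2 (pA P V1) Q2s x) ≤ 1 := by
  have hs := hdual.1
  have hs1 : (0:ℝ) < 1 + s := by linarith
  have hV1 := hach.1
  have hpA := isPMF_pA hP hV1
  have hu : ∀ x, 0 < bInv g d1 d2 s t1 t2 (pA P V1) Q2s x := fun x => bInv_pos hpA Q2s x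
  have hQ1e : ∀ ε : ℝ, 0 ≤ ε → ε ≤ 1 →
      IsPMF (fun a => (1 - ε) * pA P V1 a + ε * (if a = a0 then (1:ℝ) else 0)) := by
    intro ε h0 h1
    constructor
    · intro a
      dsimp only
      have hx : (0:ℝ) ≤ if a = a0 then (1:ℝ) else 0 := by split_ifs <;> norm_num
      have hy := hpA.1 a
      have h2 : (0:ℝ) ≤ 1 - ε := by linarith
      nlinarith
    · rw [Finset.sum_add_distrib, ← Finset.mul_sum, ← Finset.mul_sum, hpA.2,
        Finset.sum_ite_eq' Finset.univ a0 (fun _ => (1:ℝ))]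
      simp
  have hbeps : ∀ ε : ℝ, ∀ x, bInv g d1 d2 s t1 t2
      (fun a => (1 - ε) * pA P V1 a + ε * (if a = a0 then (1:ℝ) else 0)) Q2s x
      = (1 - ε) * bInv g d1 d2 s t1 t2 (pA P V1) Q2s x + ε * eF g d1 d2 s t1 t2 Q2s a0 x := by
    intro ε x
    rw [show bInv g d1 d2 s t1 t2
        (fun a => (1 - ε) * pA P V1 a + ε * (if a = a0 then (1:ℝ) else 0)) Q2s x
      = ∑ a, ((1 - ε) * pA P V1 a + ε * (if a = a0 then (1:ℝ) else 0)) *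
          Real.exp (-((t1 * d1 x a + Real.log (beta2 d2 t2 Q2s x (g x) a)) / (1 + s)))
      from rfl]
    have hterm : ∀ a, ((1 - ε) * pA P V1 a + ε * (if a = a0 then (1:ℝ) else 0)) *
        Real.exp (-((t1 * d1 x a + Real.log (beta2 d2 t2 Q2s x (g x) a)) / (1 + s)))
        = (1 - ε) * (pA P V1 a *
            Real.exp (-((t1 * d1 x a + Real.log (beta2 d2 t2 Q2s x (g x) a)) / (1 + s))))
          + ε * (if a = a0 then
              Real.exp (-((t1 * d1 x a + Real.log (beta2 d2 t2 Q2s x (g x) a)) / (1 + s)))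
            else 0) := by
      intro a
      split_ifs <;> ring
    simp only [hterm]
    rw [Finset.sum_add_distrib, ← Finset.mul_sum, ← Finset.mul_sum,
      Finset.sum_ite_eq' Finset.univ a0]
    simp only [Finset.mem_univ, if_true]
    rw [eF_eq_E1]
    rfl
  have hle : ∀ ε ∈ Set.Ioo (0:ℝ) 1,
      (∑ x, P x * Real.log ((1 - ε) * bInv g d1 d2 s t1 t2 (pA P V1) Q2s x + ε * eF g d1 d2 s t1 t2 Q2s a0 x))
        - (∑ x, P x * Real.log (bInv g d1 d2 s t1 t2 (pA P V1) Q2s x)) ≤ 0 := by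
    intro ε hε
    have hk := key_ineq hP hpY hd1 hd2 hdual hach hQ2s hind
      (hQ1e ε hε.1.le hε.2.le) hQ2s
    simp only [hbeps ε] at hk
    linarith
  have hder : HasDerivAt (fun ε : ℝ => (∑ x, P x * Real.log
      ((1 - ε) * bInv g d1 d2 s t1 t2 (pA P V1) Q2s x + ε * eF g d1 d2 s t1 t2 Q2s a0 x)) - (∑ x, P x * Real.log (bInv g d1 d2 s t1 t2 (pA P V1) Q2s x)))
      (∑ x, P x * ((eF g d1 d2 s t1 t2 Q2s a0 x - bInv g d1 d2 s t1 t2 (pA P V1) Q2s x) / bInv g d1 d2 s t1 t2 (pA P V1) Q2s x)) 0 := by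
    refine HasDerivAt.sub_const _ ?_
    refine HasDerivAt.fun_sum fun x _ => ?_
    refine HasDerivAt.const_mul (P x) ?_
    have h1 : HasDerivAt (fun ε : ℝ => (1 - ε) * bInv g d1 d2 s t1 t2 (pA P V1) Q2s x + ε * eF g d1 d2 s t1 t2 Q2s a0 x)
        (eF g d1 d2 s t1 t2 Q2s a0 x - bInv g d1 d2 s t1 t2 (pA P V1) Q2s x) 0 := by
      have ha := ((hasDerivAt_id (0:ℝ)).const_sub 1).mul_const (bInv g d1 d2 s t1 t2 (pA P V1) Q2s x)
      have hb := (hasDerivAt_id (0:ℝ)).mul_const (eF g d1 d2 s t1 t2 Q2s a0 x)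
      exact (ha.add hb).congr_deriv (by ring)
    have hval : (1 - (0:ℝ)) * bInv g d1 d2 s t1 t2 (pA P V1) Q2s x + 0 * eF g d1 d2 s t1 t2 Q2s a0 x = bInv g d1 d2 s t1 t2 (pA P V1) Q2s x := by ring
    have h2 := h1.log (by rw [hval]; exact ne_of_gt (hu x))
    rw [hval] at h2
    exact h2
  have h0 : ((fun ε : ℝ => (∑ x, P x * Real.log
      ((1 - ε) * bInv g d1 d2 s t1 t2 (pA P V1) Q2s x + ε * eF g d1 d2 s t1 t2 Q2s a0 x)) - (∑ x, P x * Real.log (bInv g d1 d2 s t1 t2 (pA P V1) Q2s x))) 0) = 0 := by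
    norm_num
  have hc := deriv_nonpos_of_nonpos hder h0 hle
  have hsplit : ∀ x, P x * ((eF g d1 d2 s t1 t2 Q2s a0 x - bInv g d1 d2 s t1 t2 (pA P V1) Q2s x) / bInv g d1 d2 s t1 t2 (pA P V1) Q2s x)
      = P x * (eF g d1 d2 s t1 t2 Q2s a0 x / bInv g d1 d2 s t1 t2 (pA P V1) Q2s x) - P x := by
    intro x
    field_simp [ne_of_gt (hu x)]
  have hc2 : (∑ x, (P x * (eF g d1 d2 s t1 t2 Q2s a0 x / bInv g d1 d2 s t1 t2 (pA P V1) Q2s x) - P x)) ≤ 0 := by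
    refine le_trans (le_of_eq (Finset.sum_congr rfl fun x _ => (hsplit x).symm)) hc
  rw [Finset.sum_sub_distrib, hP.2] at hc2
  linarith

end AuxFY6
section AuxFY7

variable {X Y X1 X2 : Type*} [Fintype X] [Fintype Y] [Fintype X1] [Fintype X2] [DecidableEq Y]
variable {P : X → ℝ} {g : X → Y} {V1 : X → X1 → ℝ} {V2 : X → X1 → X2 → ℝ}
variable {d1 : X → X1 → ℝ} {d2 : X → X2 → ℝ} {R1 D1 D2 s t1 t2 : ℝ}
variable {Q2s : Y → X1 → X2 → ℝ}

lemma collapse_ite2 (P : X → ℝ) (g : X → Y) (F : X → Y → ℝ) :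
    (∑ y, ∑ x, (if g x = y then P x else 0) * F x y) = ∑ x, P x * F x (g x) := by
  rw [Finset.sum_comm]
  exact Finset.sum_congr rfl fun x _ => collapse_ite P g F x

/-- Core estimate: `w₂(a₀, Q₂) ≤ w₁(a₀)`. -/
lemma w2_core (hP : IsPMF P) (hpY : ∀ y, 0 < pY P g y)
    (hd1 : ∀ x a, 0 ≤ d1 x a) (hd2 : ∀ x b, 0 ≤ d2 x b)
    (hdual : DualOpt P g d1 d2 R1 D1 D2 s t1 t2)
    (hach : Achieves P g d1 d2 R1 D1 D2 V1 V2)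
    (hQ2s : ∀ y a, IsPMF (Q2s y a))
    (hind : ∀ y a, 0 < pYA P g V1 y a → ∀ b, Q2s y a b = pBgYA P g V1 V2 y a b)
    (hmax : ∀ y a, pYA P g V1 y a = 0 →
      ∀ Q2 : Y → X1 → X2 → ℝ, (∀ y' a', IsPMF (Q2 y' a')) →
        (∑ x, (if g x = y then P x else 0) *
            (beta d1 d2 s t1 t2 (pA P V1) Q2s x y *
              Real.exp (-(Real.log (beta2 d2 t2 Q2 x y a)) / (1 + s)) *
              Real.exp (-(t1 * d1 x a) / (1 + s)))) / pY P g y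
        ≤ (∑ x, (if g x = y then P x else 0) *
            (beta d1 d2 s t1 t2 (pA P V1) Q2s x y *
              Real.exp (-(Real.log (beta2 d2 t2 Q2s x y a)) / (1 + s)) *
              Real.exp (-(t1 * d1 x a) / (1 + s)))) / pY P g y)
    (a0 : X1) (Q2 : Y → X1 → X2 → ℝ) (hQ2 : ∀ y a, IsPMF (Q2 y a)) :
    ∑ x, P x * (eF g d1 d2 s t1 t2 Q2s a0 x / bInv g d1 d2 s t1 t2 (pA P V1) Q2s x) * (mB g d2 t2 Q2 a0 x / mB g d2 t2 Q2s a0 x)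
      ≤ ∑ x, P x * (eF g d1 d2 s t1 t2 Q2s a0 x / bInv g d1 d2 s t1 t2 (pA P V1) Q2s x) := by
  have hs := hdual.1
  have hs1 : (0:ℝ) < 1 + s := by linarith
  have hV1 := hach.1
  have hpA := isPMF_pA hP hV1
  have hu : ∀ x, 0 < bInv g d1 d2 s t1 t2 (pA P V1) Q2s x := fun x => bInv_pos hpA Q2s x
  have hm : ∀ x, 0 < mB g d2 t2 Q2s a0 x := fun x => mB_pos hQ2s a0 x
  have hv : ∀ x, 0 < mB g d2 t2 Q2 a0 x := fun x => mB_pos hQ2 a0 x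
  -- reduce to the star inequality
  suffices hstar : ∑ x, P x * (eF g d1 d2 s t1 t2 Q2s a0 x / bInv g d1 d2 s t1 t2 (pA P V1) Q2s x) * ((mB g d2 t2 Q2 a0 x - mB g d2 t2 Q2s a0 x) / mB g d2 t2 Q2s a0 x) ≤ 0 by
    have hsp : ∀ x, P x * (eF g d1 d2 s t1 t2 Q2s a0 x / bInv g d1 d2 s t1 t2 (pA P V1) Q2s x) * ((mB g d2 t2 Q2 a0 x - mB g d2 t2 Q2s a0 x) / mB g d2 t2 Q2s a0 x)
        = P x * (eF g d1 d2 s t1 t2 Q2s a0 x / bInv g d1 d2 s t1 t2 (pA P V1) Q2s x) * (mB g d2 t2 Q2 a0 x / mB g d2 t2 Q2s a0 x) - P x * (eF g d1 d2 s t1 t2 Q2s a0 x / bInv g d1 d2 s t1 t2 (pA P V1) Q2s x) := by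
      intro x
      field_simp [ne_of_gt (hu x), ne_of_gt (hm x)]
    have h2 : ∑ x, (P x * (eF g d1 d2 s t1 t2 Q2s a0 x / bInv g d1 d2 s t1 t2 (pA P V1) Q2s x) * (mB g d2 t2 Q2 a0 x / mB g d2 t2 Q2s a0 x)
        - P x * (eF g d1 d2 s t1 t2 Q2s a0 x / bInv g d1 d2 s t1 t2 (pA P V1) Q2s x)) ≤ 0 := by
      refine le_trans (le_of_eq (Finset.sum_congr rfl fun x _ => (hsp x).symm)) hstar
    rw [Finset.sum_sub_distrib] at h2
    linarith
  rcases (pA_nonneg hP hV1 a0).lt_or_eq with hpa | hpa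
  · -- positive case: perturb `Q2s` at `a0` and use `key_ineq`
    have hQ2d : ∀ δ : ℝ, 0 ≤ δ → δ ≤ 1 → ∀ y' a', IsPMF (fun b =>
        if a' = a0 then (1 - δ) * Q2s y' a' b + δ * Q2 y' a' b else Q2s y' a' b) := by
      intro δ h0 h1 y' a'
      by_cases h : a' = a0
      · simp only [h, if_true]
        constructor
        · intro b
          dsimp only
          have := (hQ2s y' a0).1 b
          have := (hQ2 y' a0).1 b
          nlinarith
        · rw [Finset.sum_add_distrib, ← Finset.mul_sum, ← Finset.mul_sum,
            (hQ2s y' a0).2, (hQ2 y' a0).2]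
          ring
      · simp only [h, if_false]
        exact hQ2s y' a'
    have hbdel : ∀ δ : ℝ, ∀ x, bInv g d1 d2 s t1 t2 (pA P V1)
        (fun y' a' b => if a' = a0 then (1 - δ) * Q2s y' a' b + δ * Q2 y' a' b
          else Q2s y' a' b) x
        = bInv g d1 d2 s t1 t2 (pA P V1) Q2s x + pA P V1 a0 *
            (Real.exp ((Real.log ((1 - δ) * mB g d2 t2 Q2s a0 x + δ * mB g d2 t2 Q2 a0 x) - t1 * d1 x a0) / (1 + s))
              - eF g d1 d2 s t1 t2 Q2s a0 x) := by
      intro δ x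
      have hun : bInv g d1 d2 s t1 t2 (pA P V1) Q2s x = ∑ a ∈ Finset.univ.erase a0, pA P V1 a *
            Real.exp (-((t1 * d1 x a + Real.log (beta2 d2 t2 Q2s x (g x) a)) / (1 + s)))
          + pA P V1 a0 * eF g d1 d2 s t1 t2 Q2s a0 x := by
        rw [show bInv g d1 d2 s t1 t2 (pA P V1) Q2s x = ∑ a, pA P V1 a *
            Real.exp (-((t1 * d1 x a + Real.log (beta2 d2 t2 Q2s x (g x) a)) / (1 + s)))
          from rfl, ← Finset.sum_erase_add Finset.univ _ (Finset.mem_univ a0),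
          eF_eq_E1]
      have hdn : bInv g d1 d2 s t1 t2 (pA P V1)
          (fun y' a' b => if a' = a0 then (1 - δ) * Q2s y' a' b + δ * Q2 y' a' b
            else Q2s y' a' b) x
          = ∑ a ∈ Finset.univ.erase a0, pA P V1 a *
              Real.exp (-((t1 * d1 x a + Real.log (beta2 d2 t2 Q2s x (g x) a)) / (1 + s)))
            + pA P V1 a0 *
              Real.exp ((Real.log ((1 - δ) * mB g d2 t2 Q2s a0 x + δ * mB g d2 t2 Q2 a0 x) - t1 * d1 x a0) / (1 + s)) := by
        rw [show bInv g d1 d2 s t1 t2 (pA P V1)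
            (fun y' a' b => if a' = a0 then (1 - δ) * Q2s y' a' b + δ * Q2 y' a' b
              else Q2s y' a' b) x
          = ∑ a, pA P V1 a * Real.exp (-((t1 * d1 x a + Real.log (beta2 d2 t2
              (fun y' a' b => if a' = a0 then (1 - δ) * Q2s y' a' b + δ * Q2 y' a' b
                else Q2s y' a' b) x (g x) a)) / (1 + s)))
          from rfl, ← Finset.sum_erase_add Finset.univ _ (Finset.mem_univ a0)]
        congr 1
        · refine Finset.sum_congr rfl fun a ha => ?_
          have hne : a ≠ a0 := (Finset.mem_erase.mp ha).1
          have hbeq : beta2 d2 t2 (fun y' a' b => if a' = a0 then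
                (1 - δ) * Q2s y' a' b + δ * Q2 y' a' b else Q2s y' a' b) x (g x) a
              = beta2 d2 t2 Q2s x (g x) a := by
            rw [beta2, beta2]
            congr 1
            refine Finset.sum_congr rfl fun b _ => ?_
            rw [if_neg hne]
          rw [hbeq]
        · congr 1
          have hbb : beta2 d2 t2 (fun y' a' b => if a' = a0 then
                (1 - δ) * Q2s y' a' b + δ * Q2 y' a' b else Q2s y' a' b) x (g x) a0
              = ((1 - δ) * mB g d2 t2 Q2s a0 x + δ * mB g d2 t2 Q2 a0 x)⁻¹ := by
            rw [beta2]
            congr 1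
            rw [show (∑ b, (if a0 = a0 then (1 - δ) * Q2s (g x) a0 b + δ * Q2 (g x) a0 b
                else Q2s (g x) a0 b) * Real.exp (-(t2 * d2 x b)))
              = ∑ b, ((1 - δ) * (Q2s (g x) a0 b * Real.exp (-(t2 * d2 x b)))
                + δ * (Q2 (g x) a0 b * Real.exp (-(t2 * d2 x b)))) from
              Finset.sum_congr rfl fun b _ => by rw [if_pos rfl]; ring]
            rw [Finset.sum_add_distrib, ← Finset.mul_sum, ← Finset.mul_sum]
            rfl
          rw [hbb, Real.log_inv]
          congr 1
          ring
      rw [hdn, hun]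
      ring
    have hle : ∀ δ ∈ Set.Ioo (0:ℝ) 1,
        (∑ x, P x * Real.log (bInv g d1 d2 s t1 t2 (pA P V1) Q2s x + pA P V1 a0 *
          (Real.exp ((Real.log ((1 - δ) * mB g d2 t2 Q2s a0 x + δ * mB g d2 t2 Q2 a0 x) - t1 * d1 x a0) / (1 + s))
            - eF g d1 d2 s t1 t2 Q2s a0 x)))
          - (∑ x, P x * Real.log (bInv g d1 d2 s t1 t2 (pA P V1) Q2s x)) ≤ 0 := by
      intro δ hδ
      have hk := key_ineq hP hpY hd1 hd2 hdual hach hQ2s hind hpA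
        (hQ2d δ hδ.1.le hδ.2.le)
      simp only [hbdel δ] at hk
      linarith
    have hder : HasDerivAt (fun δ : ℝ => (∑ x, P x * Real.log (bInv g d1 d2 s t1 t2 (pA P V1) Q2s x + pA P V1 a0 *
        (Real.exp ((Real.log ((1 - δ) * mB g d2 t2 Q2s a0 x + δ * mB g d2 t2 Q2 a0 x) - t1 * d1 x a0) / (1 + s))
          - eF g d1 d2 s t1 t2 Q2s a0 x))) - (∑ x, P x * Real.log (bInv g d1 d2 s t1 t2 (pA P V1) Q2s x)))
        (∑ x, P x * (pA P V1 a0 * eF g d1 d2 s t1 t2 Q2s a0 x * ((mB g d2 t2 Q2 a0 x - mB g d2 t2 Q2s a0 x) / mB g d2 t2 Q2s a0 x) / (1 + s) / bInv g d1 d2 s t1 t2 (pA P V1) Q2s x)) 0 := by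
      refine HasDerivAt.sub_const _ ?_
      refine HasDerivAt.fun_sum fun x _ => ?_
      exact (hasDeriv_logmix (hm x) (hu x) hs1 rfl).const_mul (P x)
    have h0 : ((fun δ : ℝ => (∑ x, P x * Real.log (bInv g d1 d2 s t1 t2 (pA P V1) Q2s x + pA P V1 a0 *
        (Real.exp ((Real.log ((1 - δ) * mB g d2 t2 Q2s a0 x + δ * mB g d2 t2 Q2 a0 x) - t1 * d1 x a0) / (1 + s))
          - eF g d1 d2 s t1 t2 Q2s a0 x))) - (∑ x, P x * Real.log (bInv g d1 d2 s t1 t2 (pA P V1) Q2s x))) 0) = 0 := by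
      norm_num [eF]
    have hc := deriv_nonpos_of_nonpos hder h0 hle
    have heq : ∑ x, P x * (eF g d1 d2 s t1 t2 Q2s a0 x / bInv g d1 d2 s t1 t2 (pA P V1) Q2s x) * ((mB g d2 t2 Q2 a0 x - mB g d2 t2 Q2s a0 x) / mB g d2 t2 Q2s a0 x)
        = ((1 + s) / pA P V1 a0) * ∑ x, P x *
          (pA P V1 a0 * eF g d1 d2 s t1 t2 Q2s a0 x * ((mB g d2 t2 Q2 a0 x - mB g d2 t2 Q2s a0 x) / mB g d2 t2 Q2s a0 x) / (1 + s) / bInv g d1 d2 s t1 t2 (pA P V1) Q2s x) := by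
      rw [Finset.mul_sum]
      refine Finset.sum_congr rfl fun x _ => ?_
      field_simp [ne_of_gt (hu x), ne_of_gt (hm x), ne_of_gt hpa]
    rw [heq]
    have hq : (0:ℝ) ≤ (1 + s) / pA P V1 a0 := by positivity
    exact mul_nonpos_of_nonneg_of_nonpos hq hc
  · -- null case: use `hmax`
    have hpYA0 : ∀ y, pYA P g V1 y a0 = 0 := by
      intro y
      refine le_antisymm ?_ (pYA_nonneg hP hV1 y a0)
      rw [hpa]
      exact pYA_le_pA hP hV1 y a0
    have hQ2e : ∀ ε : ℝ, 0 ≤ ε → ε ≤ 1 → ∀ y' a', IsPMF (fun b =>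
        (1 - ε) * Q2s y' a' b + ε * Q2 y' a' b) := by
      intro ε h0 h1 y' a'
      constructor
      · intro b
        dsimp only
        have := (hQ2s y' a').1 b
        have := (hQ2 y' a').1 b
        nlinarith
      · rw [Finset.sum_add_distrib, ← Finset.mul_sum, ← Finset.mul_sum,
          (hQ2s y' a').2, (hQ2 y' a').2]
        ring
    -- rewrite the summed hmax inequality
    have hterm : ∀ (ε : ℝ) x, beta d1 d2 s t1 t2 (pA P V1) Q2s x (g x) *
          Real.exp (-(Real.log (beta2 d2 t2
            (fun y' a' b => (1 - ε) * Q2s y' a' b + ε * Q2 y' a' b) x (g x) a0)) / (1 + s)) *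
          Real.exp (-(t1 * d1 x a0) / (1 + s))
        = (bInv g d1 d2 s t1 t2 (pA P V1) Q2s x)⁻¹ *
            Real.exp ((Real.log ((1 - ε) * mB g d2 t2 Q2s a0 x + ε * mB g d2 t2 Q2 a0 x) - t1 * d1 x a0) / (1 + s)) := by
      intro ε x
      have hbb : beta2 d2 t2 (fun y' a' b => (1 - ε) * Q2s y' a' b + ε * Q2 y' a' b)
          x (g x) a0 = ((1 - ε) * mB g d2 t2 Q2s a0 x + ε * mB g d2 t2 Q2 a0 x)⁻¹ := by
        rw [beta2]
        congr 1
        rw [show (∑ b, ((1 - ε) * Q2s (g x) a0 b + ε * Q2 (g x) a0 b)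
            * Real.exp (-(t2 * d2 x b)))
          = ∑ b, ((1 - ε) * (Q2s (g x) a0 b * Real.exp (-(t2 * d2 x b)))
            + ε * (Q2 (g x) a0 b * Real.exp (-(t2 * d2 x b)))) from
          Finset.sum_congr rfl fun b _ => by ring]
        rw [Finset.sum_add_distrib, ← Finset.mul_sum, ← Finset.mul_sum]
        rfl
      rw [beta_eq_bInv, hbb, Real.log_inv, neg_neg, mul_assoc, ← Real.exp_add]
      congr 2
      ring
    have htermR : ∀ x, beta d1 d2 s t1 t2 (pA P V1) Q2s x (g x) *
          Real.exp (-(Real.log (beta2 d2 t2 Q2s x (g x) a0)) / (1 + s)) *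
          Real.exp (-(t1 * d1 x a0) / (1 + s))
        = (bInv g d1 d2 s t1 t2 (pA P V1) Q2s x)⁻¹ * eF g d1 d2 s t1 t2 Q2s a0 x := by
      intro x
      rw [beta_eq_bInv, log_beta2_eq, neg_neg, mul_assoc, ← Real.exp_add, eF]
      congr 2
      ring
    have hle : ∀ ε ∈ Set.Ioo (0:ℝ) 1,
        (∑ x, P x * ((bInv g d1 d2 s t1 t2 (pA P V1) Q2s x)⁻¹ *
          Real.exp ((Real.log ((1 - ε) * mB g d2 t2 Q2s a0 x + ε * mB g d2 t2 Q2 a0 x) - t1 * d1 x a0) / (1 + s))))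
          - (∑ x, P x * ((bInv g d1 d2 s t1 t2 (pA P V1) Q2s x)⁻¹ * eF g d1 d2 s t1 t2 Q2s a0 x)) ≤ 0 := by
      intro ε hε
      have hsum : ∀ y : Y, (∑ x, (if g x = y then P x else 0) *
            (beta d1 d2 s t1 t2 (pA P V1) Q2s x y *
              Real.exp (-(Real.log (beta2 d2 t2
                (fun y' a' b => (1 - ε) * Q2s y' a' b + ε * Q2 y' a' b) x y a0)) / (1 + s)) *
              Real.exp (-(t1 * d1 x a0) / (1 + s))))
          ≤ ∑ x, (if g x = y then P x else 0) *
            (beta d1 d2 s t1 t2 (pA P V1) Q2s x y *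
              Real.exp (-(Real.log (beta2 d2 t2 Q2s x y a0)) / (1 + s)) *
              Real.exp (-(t1 * d1 x a0) / (1 + s))) := by
        intro y
        exact (div_le_div_iff_of_pos_right (hpY y)).mp
          (hmax y a0 (hpYA0 y) _ (hQ2e ε hε.1.le hε.2.le))
      have hsum2 := Finset.sum_le_sum (fun y (_ : y ∈ Finset.univ) => hsum y)
      rw [collapse_ite2 P g, collapse_ite2 P g] at hsum2
      simp only [hterm ε, htermR] at hsum2
      linarith
    have hder : HasDerivAt (fun ε : ℝ => (∑ x, P x * ((bInv g d1 d2 s t1 t2 (pA P V1) Q2s x)⁻¹ *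
        Real.exp ((Real.log ((1 - ε) * mB g d2 t2 Q2s a0 x + ε * mB g d2 t2 Q2 a0 x) - t1 * d1 x a0) / (1 + s))))
          - (∑ x, P x * ((bInv g d1 d2 s t1 t2 (pA P V1) Q2s x)⁻¹ * eF g d1 d2 s t1 t2 Q2s a0 x)))
        (∑ x, P x * ((bInv g d1 d2 s t1 t2 (pA P V1) Q2s x)⁻¹ *
          (eF g d1 d2 s t1 t2 Q2s a0 x * ((mB g d2 t2 Q2 a0 x - mB g d2 t2 Q2s a0 x) / mB g d2 t2 Q2s a0 x) / (1 + s)))) 0 := by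
      refine HasDerivAt.sub_const _ ?_
      refine HasDerivAt.fun_sum fun x _ => ?_
      exact ((hasDeriv_mix (hm x) hs1).const_mul ((bInv g d1 d2 s t1 t2 (pA P V1) Q2s x)⁻¹)).const_mul (P x)
    have h0 : ((fun ε : ℝ => (∑ x, P x * ((bInv g d1 d2 s t1 t2 (pA P V1) Q2s x)⁻¹ *
        Real.exp ((Real.log ((1 - ε) * mB g d2 t2 Q2s a0 x + ε * mB g d2 t2 Q2 a0 x) - t1 * d1 x a0) / (1 + s))))
          - (∑ x, P x * ((bInv g d1 d2 s t1 t2 (pA P V1) Q2s x)⁻¹ * eF g d1 d2 s t1 t2 Q2s a0 x))) 0) = 0 := by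
      norm_num [eF]
    have hc := deriv_nonpos_of_nonpos hder h0 hle
    have heq : ∑ x, P x * (eF g d1 d2 s t1 t2 Q2s a0 x / bInv g d1 d2 s t1 t2 (pA P V1) Q2s x) * ((mB g d2 t2 Q2 a0 x - mB g d2 t2 Q2s a0 x) / mB g d2 t2 Q2s a0 x)
        = (1 + s) * ∑ x, P x * ((bInv g d1 d2 s t1 t2 (pA P V1) Q2s x)⁻¹ *
          (eF g d1 d2 s t1 t2 Q2s a0 x * ((mB g d2 t2 Q2 a0 x - mB g d2 t2 Q2s a0 x) / mB g d2 t2 Q2s a0 x) / (1 + s))) := by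
      rw [Finset.mul_sum]
      refine Finset.sum_congr rfl fun x _ => ?_
      field_simp [ne_of_gt (hu x), ne_of_gt (hm x)]
    rw [heq]
    exact mul_nonpos_of_nonneg_of_nonpos hs1.le hc

end AuxFY7

/-- Lemma 7 of the paper: for an optimal test-channel pair for
`𝖱_FY(R₁,D₁,D₂|P_X)`, with the induced conditional `P*_{X̂₂|YX̂₁}` chosen on null sets
according to the maximization rule, one has `w₂(x̂₁,Q) ≤ w₁(x̂₁) ≤ 1`. -/
theorem w_le_one_fy
    {X Y X1 X2 : Type*} [Fintype X] [Fintype Y] [Fintype X1] [Fintype X2] [DecidableEq Y]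
    (P : X → ℝ) (g : X → Y) (d1 : X → X1 → ℝ) (d2 : X → X2 → ℝ)
    (R1 D1 D2 s t1 t2 : ℝ)
    (hP : IsPMF P) (hpY : ∀ y, 0 < pY P g y)
    (hd1 : ∀ x a, 0 ≤ d1 x a) (hd2 : ∀ x b, 0 ≤ d2 x b)
    (hdual : DualOpt P g d1 d2 R1 D1 D2 s t1 t2)
    -- a pair of test channels achieving `𝖱_FY(R₁,D₁,D₂|P_X)`
    (V1 : X → X1 → ℝ) (V2 : X → X1 → X2 → ℝ)
    (hach : Achieves P g d1 d2 R1 D1 D2 V1 V2)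
    -- the version `Q2s` of `P*_{X̂₂|YX̂₁}` with the null-set maximization rule
    (Q2s : Y → X1 → X2 → ℝ) (hQ2s : ∀ y a, IsPMF (Q2s y a))
    (hind : ∀ y a, 0 < pYA P g V1 y a → ∀ b, Q2s y a b = pBgYA P g V1 V2 y a b)
    (hmax : ∀ y a, pYA P g V1 y a = 0 →
      ∀ Q2 : Y → X1 → X2 → ℝ, (∀ y' a', IsPMF (Q2 y' a')) →
        (∑ x, (if g x = y then P x else 0) *
            (beta d1 d2 s t1 t2 (pA P V1) Q2s x y *
              Real.exp (-(Real.log (beta2 d2 t2 Q2 x y a)) / (1 + s)) *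
              Real.exp (-(t1 * d1 x a) / (1 + s)))) / pY P g y
        ≤ (∑ x, (if g x = y then P x else 0) *
            (beta d1 d2 s t1 t2 (pA P V1) Q2s x y *
              Real.exp (-(Real.log (beta2 d2 t2 Q2s x y a)) / (1 + s)) *
              Real.exp (-(t1 * d1 x a) / (1 + s)))) / pY P g y) :
    ∀ a : X1, ∀ Q2 : Y → X1 → X2 → ℝ, (∀ y' a', IsPMF (Q2 y' a')) →
      -- w₂(x̂₁, Q_{X̂₂|YX̂₁}) ≤ w₁(x̂₁) ≤ 1
      (∑ x, ∑ y, ∑ b, (if g x = y then P x else 0) * Q2 y a b *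
          Real.exp ((Real.log (beta d1 d2 s t1 t2 (pA P V1) Q2s x y)
              + (s / (1 + s)) * Real.log (beta2 d2 t2 Q2s x y a))
            - t1 * d1 x a / (1 + s) - t2 * d2 x b))
        ≤ (∑ x, ∑ y, (if g x = y then P x else 0) *
            Real.exp ((Real.log (beta d1 d2 s t1 t2 (pA P V1) Q2s x y)
                - (1 / (1 + s)) * Real.log (beta2 d2 t2 Q2s x y a))
              - t1 * d1 x a / (1 + s)))
      ∧ (∑ x, ∑ y, (if g x = y then P x else 0) *
            Real.exp ((Real.log (beta d1 d2 s t1 t2 (pA P V1) Q2s x y)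
                - (1 / (1 + s)) * Real.log (beta2 d2 t2 Q2s x y a))
              - t1 * d1 x a / (1 + s))) ≤ 1 := by
  intro a0 Q2 hQ2
  have hs := hdual.1
  have hs1 : (0:ℝ) < 1 + s := by linarith
  have hV1 := hach.1
  have hpA := isPMF_pA hP hV1
  have hu : ∀ x, 0 < bInv g d1 d2 s t1 t2 (pA P V1) Q2s x := fun x => bInv_pos hpA Q2s x
  have hm : ∀ x, 0 < mB g d2 t2 Q2s a0 x := fun x => mB_pos hQ2s a0 x
  -- rewrite w₁
  have hW1eq : (∑ x, ∑ y, (if g x = y then P x else 0) *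
        Real.exp ((Real.log (beta d1 d2 s t1 t2 (pA P V1) Q2s x y)
            - (1 / (1 + s)) * Real.log (beta2 d2 t2 Q2s x y a0))
          - t1 * d1 x a0 / (1 + s)))
      = ∑ x, P x * (eF g d1 d2 s t1 t2 Q2s a0 x / bInv g d1 d2 s t1 t2 (pA P V1) Q2s x) := by
    refine Finset.sum_congr rfl fun x _ => ?_
    rw [collapse_ite P g (fun x y =>
      Real.exp ((Real.log (beta d1 d2 s t1 t2 (pA P V1) Q2s x y)
          - (1 / (1 + s)) * Real.log (beta2 d2 t2 Q2s x y a0))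
        - t1 * d1 x a0 / (1 + s))) x]
    congr 1
    rw [beta_eq_bInv, Real.log_inv, log_beta2_eq]
    rw [show (-Real.log (bInv g d1 d2 s t1 t2 (pA P V1) Q2s x) - 1 / (1 + s) * -Real.log (mB g d2 t2 Q2s a0 x))
          - t1 * d1 x a0 / (1 + s)
        = (Real.log (mB g d2 t2 Q2s a0 x) - t1 * d1 x a0) / (1 + s) + -Real.log (bInv g d1 d2 s t1 t2 (pA P V1) Q2s x) from by ring]
    rw [Real.exp_add, Real.exp_neg, Real.exp_log (hu x), eF]
    ring
  -- rewrite w₂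
  have hW2eq : (∑ x, ∑ y, ∑ b, (if g x = y then P x else 0) * Q2 y a0 b *
        Real.exp ((Real.log (beta d1 d2 s t1 t2 (pA P V1) Q2s x y)
            + (s / (1 + s)) * Real.log (beta2 d2 t2 Q2s x y a0))
          - t1 * d1 x a0 / (1 + s) - t2 * d2 x b))
      = ∑ x, P x * (eF g d1 d2 s t1 t2 Q2s a0 x / bInv g d1 d2 s t1 t2 (pA P V1) Q2s x) * (mB g d2 t2 Q2 a0 x / mB g d2 t2 Q2s a0 x) := by
    refine Finset.sum_congr rfl fun x _ => ?_
    have hstep : ∀ y, (∑ b, (if g x = y then P x else 0) * Q2 y a0 b *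
          Real.exp ((Real.log (beta d1 d2 s t1 t2 (pA P V1) Q2s x y)
              + (s / (1 + s)) * Real.log (beta2 d2 t2 Q2s x y a0))
            - t1 * d1 x a0 / (1 + s) - t2 * d2 x b))
        = (if g x = y then P x else 0) * ∑ b, Q2 y a0 b *
            Real.exp ((Real.log (beta d1 d2 s t1 t2 (pA P V1) Q2s x y)
                + (s / (1 + s)) * Real.log (beta2 d2 t2 Q2s x y a0))
              - t1 * d1 x a0 / (1 + s) - t2 * d2 x b) := by
      intro y
      rw [Finset.mul_sum]
      exact Finset.sum_congr rfl fun b _ => by ring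
    simp only [hstep]
    rw [collapse_ite P g (fun x y => ∑ b, Q2 y a0 b *
      Real.exp ((Real.log (beta d1 d2 s t1 t2 (pA P V1) Q2s x y)
          + (s / (1 + s)) * Real.log (beta2 d2 t2 Q2s x y a0))
        - t1 * d1 x a0 / (1 + s) - t2 * d2 x b)) x]
    have hF : (∑ b, Q2 (g x) a0 b *
        Real.exp ((Real.log (beta d1 d2 s t1 t2 (pA P V1) Q2s x (g x))
            + (s / (1 + s)) * Real.log (beta2 d2 t2 Q2s x (g x) a0))
          - t1 * d1 x a0 / (1 + s) - t2 * d2 x b))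
        = (eF g d1 d2 s t1 t2 Q2s a0 x / bInv g d1 d2 s t1 t2 (pA P V1) Q2s x) * (mB g d2 t2 Q2 a0 x / mB g d2 t2 Q2s a0 x) := by
      have hexp : ∀ b, Real.exp ((Real.log (beta d1 d2 s t1 t2 (pA P V1) Q2s x (g x))
          + (s / (1 + s)) * Real.log (beta2 d2 t2 Q2s x (g x) a0))
          - t1 * d1 x a0 / (1 + s) - t2 * d2 x b)
          = (eF g d1 d2 s t1 t2 Q2s a0 x / (bInv g d1 d2 s t1 t2 (pA P V1) Q2s x * mB g d2 t2 Q2s a0 x)) * Real.exp (-(t2 * d2 x b)) := by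
        intro b
        rw [beta_eq_bInv, Real.log_inv, log_beta2_eq]
        rw [show (-Real.log (bInv g d1 d2 s t1 t2 (pA P V1) Q2s x) + s / (1 + s) * -Real.log (mB g d2 t2 Q2s a0 x))
              - t1 * d1 x a0 / (1 + s) - t2 * d2 x b
            = ((Real.log (mB g d2 t2 Q2s a0 x) - t1 * d1 x a0) / (1 + s)
                + (-Real.log (bInv g d1 d2 s t1 t2 (pA P V1) Q2s x) + -Real.log (mB g d2 t2 Q2s a0 x))) + -(t2 * d2 x b) from by
          field_simp
          ring]
        rw [Real.exp_add, Real.exp_add, Real.exp_add, Real.exp_neg, Real.exp_neg,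
          Real.exp_log (hu x), Real.exp_log (hm x), eF]
        ring
      simp only [hexp]
      rw [show (∑ b, Q2 (g x) a0 b * ((eF g d1 d2 s t1 t2 Q2s a0 x / (bInv g d1 d2 s t1 t2 (pA P V1) Q2s x * mB g d2 t2 Q2s a0 x)) * Real.exp (-(t2 * d2 x b))))
          = (eF g d1 d2 s t1 t2 Q2s a0 x / (bInv g d1 d2 s t1 t2 (pA P V1) Q2s x * mB g d2 t2 Q2s a0 x)) * ∑ b, Q2 (g x) a0 b * Real.exp (-(t2 * d2 x b)) from by
        rw [Finset.mul_sum]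
        exact Finset.sum_congr rfl fun b _ => by ring]
      rw [show (∑ b, Q2 (g x) a0 b * Real.exp (-(t2 * d2 x b))) = mB g d2 t2 Q2 a0 x from rfl]
      field_simp
    rw [hF]
    ring
  constructor
  · rw [hW2eq, hW1eq]
    exact w2_core hP hpY hd1 hd2 hdual hach hQ2s hind hmax a0 Q2 hQ2
  · rw [hW1eq]
    exact w1_core hP hpY hd1 hd2 hdual hach hQ2s hind a0

end FY
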